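/- arXiv:2511.21929 — 4 statements merged into one kernel-verified Lean document; each statement's English description precedes it below -/
import Mathlib

section
/- Let X be an integrable random variable, β₁, ..., βₙ ∈ (0,1) with β = Σᵢβᵢ ∈ (0,1), and m ≥ max(q_β^-(X), max_i q_{1-β+βᵢ}^-(X), 0). With A = {U_X ≤ β}, partition (A₁,...,Aₙ) of A with P(Aᵢ)=βᵢ, and Xᵢ^{(m)} = (X-m)1_{Aᵢ} + (X/n)1_{Aᶜ} + (m/(n-1))1_{A\Aᵢ}, we have Σᵢ R_{[0,βᵢ]∪[1-β+βᵢ,1]}(Xᵢ^{(m)}) = R_{[0,β]}(X) + (1/β)·E[(X - a_m)·1_{X > a_m}], where a_m = nm/(n-1). -/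
open MeasureTheory Set Filter

/-- Left `u`-quantile of a random variable `X` under measure `μ`. -/
noncomputable def leftQuantile {Ω : Type*} [MeasurableSpace Ω] (μ : Measure Ω)
    (X : Ω → ℝ) (u : ℝ) : ℝ :=
  sInf {x : ℝ | u ≤ (μ {ω | X ω ≤ x}).toReal}

/-- Averaged quantile functional `R_I`. -/
noncomputable def avgQuantile {Ω : Type*} [MeasurableSpace Ω] (μ : Measure Ω)
    (X : Ω → ℝ) (I : Set ℝ) : ℝ :=
  (volume I).toReal⁻¹ * ∫ u in I, leftQuantile μ X u

namespace QP

variable {Ω : Type*} [MeasurableSpace Ω] {μ : Measure Ω} [IsProbabilityMeasure μ] {Z : Ω → ℝ}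
  {u v x c : ℝ}

lemma F_mono (h : x ≤ c) : (μ {ω | Z ω ≤ x}).toReal ≤ (μ {ω | Z ω ≤ c}).toReal :=
  ENNReal.toReal_mono (measure_ne_top μ _) (measure_mono fun ω hω => le_trans hω h)

lemma exists_F_lt (hZ : AEMeasurable Z μ) (hu : 0 < u) :
    ∃ x : ℝ, (μ {ω | Z ω ≤ x}).toReal < u := by
  have hs : ∀ k : ℕ, NullMeasurableSet {ω | Z ω ≤ -(k:ℝ)} μ := fun k =>
    hZ.nullMeasurable measurableSet_Iic
  have hanti : Antitone fun k : ℕ => {ω | Z ω ≤ -(k:ℝ)} := by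
    intro k l hkl ω hω
    have hc : (k:ℝ) ≤ (l:ℝ) := Nat.cast_le.mpr hkl
    simp only [mem_setOf_eq] at hω ⊢
    linarith
  have hint : (⋂ k : ℕ, {ω | Z ω ≤ -(k:ℝ)}) = ∅ := by
    ext ω
    simp only [mem_iInter, mem_setOf_eq, mem_empty_iff_false, iff_false, not_forall]
    obtain ⟨k, hk⟩ := exists_nat_gt (-(Z ω))
    exact ⟨k, by push_cast; linarith⟩
  have htend := tendsto_measure_iInter_atTop hs hanti ⟨0, measure_ne_top μ _⟩
  rw [hint, measure_empty] at htend
  have : ∀ᶠ k : ℕ in atTop, μ {ω | Z ω ≤ -(k:ℝ)} < ENNReal.ofReal u := by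
    refine htend.eventually_lt_const ?_
    simpa using ENNReal.ofReal_pos.mpr hu
  obtain ⟨k, hk⟩ := this.exists
  refine ⟨-(k:ℝ), ?_⟩
  have := ENNReal.toReal_lt_toReal (measure_ne_top μ _) (by simp) |>.mpr hk
  rwa [ENNReal.toReal_ofReal hu.le] at this

lemma exists_le_F (hu1 : u < 1) : ∃ x : ℝ, u ≤ (μ {ω | Z ω ≤ x}).toReal := by
  have hmono : Monotone fun k : ℕ => {ω | Z ω ≤ (k:ℝ)} := by
    intro k l hkl ω hω
    have hc : (k:ℝ) ≤ (l:ℝ) := Nat.cast_le.mpr hkl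
    simp only [mem_setOf_eq] at hω ⊢
    linarith
  have huniv : (⋃ k : ℕ, {ω | Z ω ≤ (k:ℝ)}) = univ := by
    ext ω
    simp only [mem_iUnion, mem_setOf_eq, mem_univ, iff_true]
    obtain ⟨k, hk⟩ := exists_nat_gt (Z ω)
    exact ⟨k, hk.le⟩
  have htend := tendsto_measure_iUnion_atTop (μ := μ) hmono
  rw [huniv, measure_univ] at htend
  have : ∀ᶠ k : ℕ in atTop, ENNReal.ofReal u < μ {ω | Z ω ≤ (k:ℝ)} :=
    htend.eventually_const_lt (ENNReal.ofReal_lt_one.mpr hu1)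
  obtain ⟨k, hk⟩ := this.exists
  refine ⟨(k:ℝ), ?_⟩
  rw [← ENNReal.ofReal_le_iff_le_toReal (measure_ne_top μ _)]
  exact hk.le

lemma S_nonempty (hu1 : u < 1) : {x : ℝ | u ≤ (μ {ω | Z ω ≤ x}).toReal}.Nonempty :=
  exists_le_F hu1

lemma S_bddBelow (hZ : AEMeasurable Z μ) (hu : 0 < u) :
    BddBelow {x : ℝ | u ≤ (μ {ω | Z ω ≤ x}).toReal} := by
  obtain ⟨x₀, hx₀⟩ := exists_F_lt hZ hu
  refine ⟨x₀, fun y hy => ?_⟩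
  by_contra hlt
  push_neg at hlt
  exact absurd (le_trans hy (F_mono hlt.le)) (not_le.mpr hx₀)

lemma le_F_quantile (hZ : AEMeasurable Z μ) (hu : 0 < u) (hu1 : u < 1) :
    u ≤ (μ {ω | Z ω ≤ leftQuantile μ Z u}).toReal := by
  set q := leftQuantile μ Z u with hq
  have hne := S_nonempty (μ := μ) (Z := Z) hu1
  have hbdd := S_bddBelow hZ hu (Z := Z)
  have hs : ∀ k : ℕ, NullMeasurableSet {ω | Z ω ≤ q + 1/(k+1)} μ := fun k =>
    hZ.nullMeasurable measurableSet_Iic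
  have hanti : Antitone fun k : ℕ => {ω | Z ω ≤ q + 1/((k:ℝ)+1)} := by
    intro k l hkl ω hω
    refine le_trans hω (add_le_add_right ?_ q)
    apply one_div_le_one_div_of_le (by positivity)
    exact add_le_add_left (Nat.cast_le.mpr hkl) 1
  have hint : (⋂ k : ℕ, {ω | Z ω ≤ q + 1/((k:ℝ)+1)}) = {ω | Z ω ≤ q} := by
    ext ω
    simp only [mem_iInter, mem_setOf_eq]
    constructor
    · intro h
      by_contra hlt
      push_neg at hlt
      obtain ⟨k, hk⟩ := exists_nat_one_div_lt (sub_pos.mpr hlt)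
      exact absurd (h k) (by push_cast at hk ⊢; linarith)
    · intro h k
      have : (0:ℝ) < 1/((k:ℝ)+1) := by positivity
      linarith
  have hlow : ∀ k : ℕ, ENNReal.ofReal u ≤ μ {ω | Z ω ≤ q + 1/((k:ℝ)+1)} := by
    intro k
    have hqlt : q < q + 1/((k:ℝ)+1) := by
      have : (0:ℝ) < 1/((k:ℝ)+1) := by positivity
      linarith
    obtain ⟨s, hs', hslt⟩ := exists_lt_of_csInf_lt hne hqlt
    calc ENNReal.ofReal u ≤ μ {ω | Z ω ≤ s} := by
          rw [ENNReal.ofReal_le_iff_le_toReal (measure_ne_top μ _)]; exact hs'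
      _ ≤ _ := measure_mono fun ω hω => le_trans hω hslt.le
  have htend := tendsto_measure_iInter_atTop hs hanti ⟨0, measure_ne_top μ _⟩
  rw [hint] at htend
  have := ge_of_tendsto' htend hlow
  rwa [ENNReal.ofReal_le_iff_le_toReal (measure_ne_top μ _)] at this

lemma quantile_le_iff (hZ : AEMeasurable Z μ) (hu : 0 < u) (hu1 : u < 1) :
    leftQuantile μ Z u ≤ x ↔ u ≤ (μ {ω | Z ω ≤ x}).toReal := by
  constructor
  · intro h
    exact le_trans (le_F_quantile hZ hu hu1) (F_mono h)
  · intro h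
    exact csInf_le (S_bddBelow hZ hu) h

lemma quantile_mono (hZ : AEMeasurable Z μ) (hu : 0 < u) (huv : u ≤ v) (hv1 : v < 1) :
    leftQuantile μ Z u ≤ leftQuantile μ Z v :=
  (quantile_le_iff hZ hu (lt_of_le_of_lt huv hv1)).mpr
    (le_trans huv (le_F_quantile hZ (lt_of_lt_of_le hu huv) hv1))


lemma exists_measurable_quantile (hZ : AEMeasurable Z μ) :
    ∃ g : ℝ → ℝ, Measurable g ∧ ∀ u ∈ Ioo (0:ℝ) 1, g u = leftQuantile μ Z u := by
  classical
  refine ⟨fun u => if u ∈ Ioo (0:ℝ) 1 then leftQuantile μ Z u else leftQuantile μ Z (1/2),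
    ?_, fun u hu => if_pos hu⟩
  apply measurable_of_Iic
  intro x
  by_cases hhalf : leftQuantile μ Z (1/2) ≤ x
  · have : (fun u => if u ∈ Ioo (0:ℝ) 1 then leftQuantile μ Z u else leftQuantile μ Z (1/2)) ⁻¹'
        Iic x = (Ioo (0:ℝ) 1 ∩ Iic ((μ {ω | Z ω ≤ x}).toReal)) ∪ (Ioo (0:ℝ) 1)ᶜ := by
      ext u
      by_cases hu : u ∈ Ioo (0:ℝ) 1
      · simp only [mem_preimage, mem_Iic, if_pos hu, mem_union, mem_inter_iff, hu, true_and,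
          mem_compl_iff, not_true_eq_false, or_false]
        exact quantile_le_iff hZ hu.1 hu.2
      · simp only [mem_preimage, mem_Iic, if_neg hu, mem_union, mem_inter_iff, hu, false_and,
          mem_compl_iff, not_false_eq_true, or_true, iff_true]
        exact hhalf
    rw [this]
    exact ((measurableSet_Ioo.inter measurableSet_Iic).union measurableSet_Ioo.compl)
  · have : (fun u => if u ∈ Ioo (0:ℝ) 1 then leftQuantile μ Z u else leftQuantile μ Z (1/2)) ⁻¹'
        Iic x = Ioo (0:ℝ) 1 ∩ Iic ((μ {ω | Z ω ≤ x}).toReal) := by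
      ext u
      by_cases hu : u ∈ Ioo (0:ℝ) 1
      · simp only [mem_preimage, mem_Iic, if_pos hu, mem_inter_iff, hu, true_and]
        exact quantile_le_iff hZ hu.1 hu.2
      · simp only [mem_preimage, mem_Iic, if_neg hu, mem_inter_iff, hu, false_and, iff_false]
        exact hhalf
    rw [this]
    exact measurableSet_Ioo.inter measurableSet_Iic

lemma map_quantile (hZ : AEMeasurable Z μ) :
    Measure.map (fun u => leftQuantile μ Z u) (volume.restrict (Ioo 0 1)) = Measure.map Z μ := by
  obtain ⟨g, hgm, hg⟩ := exists_measurable_quantile hZ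
  have hae : (fun u => leftQuantile μ Z u) =ᵐ[volume.restrict (Ioo (0:ℝ) 1)] g := by
    filter_upwards [ae_restrict_mem measurableSet_Ioo] with u hu
    exact (hg u hu).symm
  rw [Measure.map_congr hae]
  have h1 : IsFiniteMeasure (Measure.map g (volume.restrict (Ioo (0:ℝ) 1))) := by
    constructor
    rw [Measure.map_apply hgm MeasurableSet.univ]
    exact lt_of_le_of_lt (measure_mono (subset_univ _)) (by simp)
  have h2 : IsFiniteMeasure (Measure.map Z μ) := by
    constructor
    rw [Measure.map_apply_of_aemeasurable hZ MeasurableSet.univ]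
    simp
  refine MeasureTheory.Measure.ext_of_Iic _ _ fun a => ?_
  rw [Measure.map_apply hgm measurableSet_Iic,
    Measure.map_apply_of_aemeasurable hZ measurableSet_Iic]
  have hFa0 : 0 ≤ (μ {ω | Z ω ≤ a}).toReal := ENNReal.toReal_nonneg
  have hFa1 : (μ {ω | Z ω ≤ a}).toReal ≤ 1 := by
    rw [← ENNReal.toReal_one]
    exact ENNReal.toReal_mono (by simp) (prob_le_one)
  have hset : g ⁻¹' Iic a ∩ Ioo 0 1 = Iic ((μ {ω | Z ω ≤ a}).toReal) ∩ Ioo 0 1 := by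
    ext u
    by_cases hu : u ∈ Ioo (0:ℝ) 1
    · simp only [mem_inter_iff, hu, and_true, mem_preimage, mem_Iic, hg u hu]
      exact quantile_le_iff hZ hu.1 hu.2
    · simp [hu]
  rw [Measure.restrict_apply (hgm measurableSet_Iic), hset]
  set t := (μ {ω | Z ω ≤ a}).toReal with ht
  have hle : volume (Iic t ∩ Ioo (0:ℝ) 1) ≤ ENNReal.ofReal t := by
    have hsub : Iic t ∩ Ioo (0:ℝ) 1 ⊆ Ioc (0:ℝ) t := fun u hu => mem_Ioc.mpr ⟨hu.2.1, hu.1⟩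
    calc volume (Iic t ∩ Ioo (0:ℝ) 1) ≤ volume (Ioc (0:ℝ) t) := measure_mono hsub
      _ = ENNReal.ofReal t := by rw [Real.volume_Ioc, sub_zero]
  have hge : ENNReal.ofReal t ≤ volume (Iic t ∩ Ioo (0:ℝ) 1) := by
    calc ENNReal.ofReal t = volume (Ioo (0:ℝ) t) := by rw [Real.volume_Ioo, sub_zero]
      _ ≤ _ := measure_mono (fun u hu => mem_inter (mem_Iic.mpr (le_of_lt hu.2))
          (mem_Ioo.mpr ⟨hu.1, lt_of_lt_of_le hu.2 hFa1⟩))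
  rw [le_antisymm hle hge, ht, ENNReal.ofReal_toReal (measure_ne_top μ _)]
  rfl

lemma integrableOn_quantile (hZ : Integrable Z μ) :
    IntegrableOn (fun u => leftQuantile μ Z u) (Ioo (0:ℝ) 1) volume := by
  have hmap := map_quantile (μ := μ) (Z := Z) hZ.aemeasurable
  obtain ⟨g, hgm, hg⟩ := exists_measurable_quantile (μ := μ) (Z := Z) hZ.aemeasurable
  have hae : (fun u => leftQuantile μ Z u) =ᵐ[volume.restrict (Ioo (0:ℝ) 1)] g := by
    filter_upwards [ae_restrict_mem measurableSet_Ioo] with u hu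
    exact (hg u hu).symm
  have hid : Integrable (id : ℝ → ℝ) (Measure.map g (volume.restrict (Ioo (0:ℝ) 1))) := by
    rw [Measure.map_congr hae.symm, hmap]
    rw [integrable_map_measure aestronglyMeasurable_id hZ.aemeasurable]
    exact hZ
  rw [integrable_map_measure aestronglyMeasurable_id hgm.aemeasurable] at hid
  exact (integrable_congr hae.symm).mp hid

lemma integral_quantile (hZ : Integrable Z μ) :
    ∫ u in Ioo (0:ℝ) 1, leftQuantile μ Z u = ∫ ω, Z ω ∂μ := by
  have hmap := map_quantile (μ := μ) (Z := Z) hZ.aemeasurable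
  obtain ⟨g, hgm, hg⟩ := exists_measurable_quantile (μ := μ) (Z := Z) hZ.aemeasurable
  have hae : (fun u => leftQuantile μ Z u) =ᵐ[volume.restrict (Ioo (0:ℝ) 1)] g := by
    filter_upwards [ae_restrict_mem measurableSet_Ioo] with u hu
    exact (hg u hu).symm
  calc ∫ u in Ioo (0:ℝ) 1, leftQuantile μ Z u = ∫ u in Ioo (0:ℝ) 1, g u :=
        integral_congr_ae hae
    _ = ∫ y, id y ∂(Measure.map g (volume.restrict (Ioo (0:ℝ) 1))) :=
        (integral_map hgm.aemeasurable aestronglyMeasurable_id).symm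
    _ = ∫ y, id y ∂(Measure.map Z μ) := by rw [Measure.map_congr hae.symm, hmap]
    _ = ∫ ω, Z ω ∂μ := integral_map hZ.aemeasurable aestronglyMeasurable_id


lemma toReal_le_toReal_of_subset {s t : Set Ω} (h : s ⊆ t) :
    (μ s).toReal ≤ (μ t).toReal :=
  ENNReal.toReal_mono (measure_ne_top μ _) (measure_mono h)

lemma bottom_lemma (hZ : Integrable Z μ) {b : ℝ} (hb0 : 0 < b) (hb1 : b < 1)
    (h1 : (μ {ω | Z ω < c}).toReal ≤ b) (h2 : b ≤ (μ {ω | Z ω ≤ c}).toReal) :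
    IntegrableOn (fun u => leftQuantile μ Z u) (Icc 0 b) volume ∧
    ∫ u in Icc 0 b, leftQuantile μ Z u = (∫ ω, min (Z ω) c ∂μ) - (1-b)*c := by
  set W := fun ω => min (Z ω) c with hWdef
  have hW : Integrable W μ := by
    have := hZ.inf (integrable_const c)
    exact this
  -- (i) quantiles agree on Ioc 0 b
  have heq1 : ∀ u ∈ Ioc (0:ℝ) b, leftQuantile μ Z u = leftQuantile μ W u := by
    intro u hu
    have hu1 : u < 1 := lt_of_le_of_lt hu.2 hb1
    unfold leftQuantile
    congr 1
    ext x
    simp only [mem_setOf_eq]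
    rcases le_or_gt c x with hcx | hxc
    · have hZx : u ≤ (μ {ω | Z ω ≤ x}).toReal :=
        le_trans hu.2 (le_trans h2 (toReal_le_toReal_of_subset fun ω hω => le_trans hω hcx))
      have hWx : u ≤ (μ {ω | W ω ≤ x}).toReal := by
        have : {ω | W ω ≤ x} = univ := eq_univ_of_forall fun ω =>
          le_trans (min_le_right _ _) hcx
        rw [this]
        simp [le_trans hu.2 hb1.le]
      simp [hZx, hWx]
    · have hsame : {ω | W ω ≤ x} = {ω | Z ω ≤ x} := by
        ext ω
        simp only [hWdef, mem_setOf_eq, min_le_iff]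
        exact ⟨fun h => h.elim id (fun h' => absurd h' (not_le.mpr hxc)), Or.inl⟩
      rw [hsame]
  -- (ii) quantile of W is c on Ioo b 1
  have heq2 : ∀ u ∈ Ioo b (1:ℝ), leftQuantile μ W u = c := by
    intro u hu
    have hu0 : 0 < u := lt_trans hb0 hu.1
    refine le_antisymm ?_ ?_
    · rw [quantile_le_iff hW.aemeasurable hu0 hu.2]
      have : {ω | W ω ≤ c} = univ := eq_univ_of_forall fun ω => show W ω ≤ c from min_le_right _ _
      rw [this]; simp [hu.2.le]
    · refine le_csInf (S_nonempty hu.2) fun x hx => ?_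
      simp only [mem_setOf_eq] at hx
      by_contra hxc
      push_neg at hxc
      have hsame : {ω | W ω ≤ x} = {ω | Z ω ≤ x} := by
        ext ω
        simp only [hWdef, mem_setOf_eq, min_le_iff]
        exact ⟨fun h => h.elim id (fun h' => absurd h' (not_le.mpr hxc)), Or.inl⟩
      rw [hsame] at hx
      have : (μ {ω | Z ω ≤ x}).toReal ≤ (μ {ω | Z ω < c}).toReal :=
        toReal_le_toReal_of_subset fun ω hω => lt_of_le_of_lt hω hxc
      linarith [hu.1]
  -- restrict congr Icc → Ioc
  have hres : (volume : Measure ℝ).restrict (Icc 0 b) = volume.restrict (Ioc 0 b) :=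
    (Measure.restrict_congr_set Ioc_ae_eq_Icc).symm
  have hsub1 : Ioc (0:ℝ) b ⊆ Ioo 0 1 := fun x hx => ⟨hx.1, lt_of_le_of_lt hx.2 hb1⟩
  have hsub2 : Ioo b (1:ℝ) ⊆ Ioo 0 1 := fun x hx => ⟨lt_trans hb0 hx.1, hx.2⟩
  have hIW1 : IntegrableOn (fun u => leftQuantile μ W u) (Ioc 0 b) volume :=
    (integrableOn_quantile hW).mono_set hsub1
  have hIW2 : IntegrableOn (fun u => leftQuantile μ W u) (Ioo b 1) volume :=
    (integrableOn_quantile hW).mono_set hsub2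
  have hIZ : IntegrableOn (fun u => leftQuantile μ Z u) (Ioc 0 b) volume :=
    hIW1.congr_fun (fun u hu => (heq1 u hu).symm) measurableSet_Ioc
  constructor
  · rw [IntegrableOn, hres]; exact hIZ
  -- the integral computation
  have hdisj : Disjoint (Ioc (0:ℝ) b) (Ioo b 1) :=
    disjoint_left.mpr fun x hx hx' => absurd hx.2 (not_le.mpr hx'.1)
  have hsplit : ∫ u in Ioo (0:ℝ) 1, leftQuantile μ W u
      = (∫ u in Ioc (0:ℝ) b, leftQuantile μ W u) + ∫ u in Ioo b (1:ℝ), leftQuantile μ W u := by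
    rw [← Ioc_union_Ioo_eq_Ioo hb0.le hb1]
    exact setIntegral_union hdisj measurableSet_Ioo hIW1 hIW2
  have hconst : ∫ u in Ioo b (1:ℝ), leftQuantile μ W u = (1-b)*c := by
    rw [setIntegral_congr_fun measurableSet_Ioo heq2, setIntegral_const]
    rw [measureReal_def, Real.volume_Ioo]
    rw [ENNReal.toReal_ofReal (by linarith)]
    ring_nf
  have hZW : ∫ u in Icc (0:ℝ) b, leftQuantile μ Z u = ∫ u in Ioc (0:ℝ) b, leftQuantile μ W u := by
    rw [hres]
    exact setIntegral_congr_fun measurableSet_Ioc heq1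
  rw [hZW, ← integral_quantile hW]
  rw [hsplit, hconst]
  ring

lemma top_lemma (hZ : Integrable Z μ) {t : ℝ} (ht0 : 0 < t) (ht1 : t < 1)
    (h1 : (μ {ω | Z ω < c}).toReal ≤ t) (h2 : t ≤ (μ {ω | Z ω ≤ c}).toReal) :
    IntegrableOn (fun u => leftQuantile μ Z u) (Icc t 1) volume ∧
    ∫ u in Icc t 1, leftQuantile μ Z u = (∫ ω, max (Z ω) c ∂μ) - t*c := by
  set W := fun ω => max (Z ω) c with hWdef
  have hW : Integrable W μ := by
    have := hZ.sup (integrable_const c)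
    exact this
  -- (i) quantiles agree on Ioo t 1
  have heq1 : ∀ u ∈ Ioo t (1:ℝ), leftQuantile μ Z u = leftQuantile μ W u := by
    intro u hu
    have hu0 : 0 < u := lt_trans ht0 hu.1
    unfold leftQuantile
    congr 1
    ext x
    simp only [mem_setOf_eq]
    rcases le_or_gt c x with hcx | hxc
    · have hsame : {ω | W ω ≤ x} = {ω | Z ω ≤ x} := by
        ext ω
        simp only [hWdef, mem_setOf_eq, max_le_iff]
        exact ⟨fun h => h.1, fun h => ⟨h, hcx⟩⟩
      rw [hsame]
    · have hZx : ¬ u ≤ (μ {ω | Z ω ≤ x}).toReal := by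
        have : (μ {ω | Z ω ≤ x}).toReal ≤ (μ {ω | Z ω < c}).toReal :=
          toReal_le_toReal_of_subset fun ω hω => lt_of_le_of_lt hω hxc
        push_neg
        linarith [hu.1]
      have hWx : ¬ u ≤ (μ {ω | W ω ≤ x}).toReal := by
        have hempty : {ω | W ω ≤ x} = (∅ : Set Ω) := by
          ext ω
          simp only [mem_setOf_eq, mem_empty_iff_false, iff_false, not_le]
          exact lt_of_lt_of_le hxc (le_max_right _ _)
        rw [hempty]
        simp only [measure_empty, ENNReal.toReal_zero, not_le]
        exact hu0
      simp [hZx, hWx]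
  -- (ii) quantile of W is c on Ioc 0 t
  have heq2 : ∀ u ∈ Ioc (0:ℝ) t, leftQuantile μ W u = c := by
    intro u hu
    have hu1 : u < 1 := lt_of_le_of_lt hu.2 ht1
    refine le_antisymm ?_ ?_
    · rw [quantile_le_iff hW.aemeasurable hu.1 hu1]
      have : {ω | W ω ≤ c} = {ω | Z ω ≤ c} := by
        ext ω
        simp only [hWdef, mem_setOf_eq, max_le_iff, and_iff_left le_rfl]
      rw [this]
      exact le_trans hu.2 h2
    · refine le_csInf (S_nonempty hu1) fun x hx => ?_
      simp only [mem_setOf_eq] at hx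
      by_contra hxc
      push_neg at hxc
      have hempty : {ω | W ω ≤ x} = (∅ : Set Ω) := by
        ext ω
        simp only [mem_setOf_eq, mem_empty_iff_false, iff_false, not_le]
        exact lt_of_lt_of_le hxc (le_max_right _ _)
      rw [hempty] at hx
      simp only [measure_empty, ENNReal.toReal_zero] at hx
      linarith [hu.1]
  have hres : (volume : Measure ℝ).restrict (Icc t 1) = volume.restrict (Ioo t 1) :=
    (Measure.restrict_congr_set Ioo_ae_eq_Icc).symm
  have hsub1 : Ioc (0:ℝ) t ⊆ Ioo 0 1 := fun x hx => ⟨hx.1, lt_of_le_of_lt hx.2 ht1⟩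
  have hsub2 : Ioo t (1:ℝ) ⊆ Ioo 0 1 := fun x hx => ⟨lt_trans ht0 hx.1, hx.2⟩
  have hIW1 : IntegrableOn (fun u => leftQuantile μ W u) (Ioc 0 t) volume :=
    (integrableOn_quantile hW).mono_set hsub1
  have hIW2 : IntegrableOn (fun u => leftQuantile μ W u) (Ioo t 1) volume :=
    (integrableOn_quantile hW).mono_set hsub2
  have hIZ : IntegrableOn (fun u => leftQuantile μ Z u) (Ioo t 1) volume :=
    hIW2.congr_fun (fun u hu => (heq1 u hu).symm) measurableSet_Ioo
  constructor
  · rw [IntegrableOn, hres]; exact hIZ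
  have hdisj : Disjoint (Ioc (0:ℝ) t) (Ioo t 1) :=
    disjoint_left.mpr fun x hx hx' => absurd hx.2 (not_le.mpr hx'.1)
  have hsplit : ∫ u in Ioo (0:ℝ) 1, leftQuantile μ W u
      = (∫ u in Ioc (0:ℝ) t, leftQuantile μ W u) + ∫ u in Ioo t (1:ℝ), leftQuantile μ W u := by
    rw [← Ioc_union_Ioo_eq_Ioo ht0.le ht1]
    exact setIntegral_union hdisj measurableSet_Ioo hIW1 hIW2
  have hconst : ∫ u in Ioc (0:ℝ) t, leftQuantile μ W u = t*c := by
    rw [setIntegral_congr_fun measurableSet_Ioc heq2, setIntegral_const]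
    rw [measureReal_def, Real.volume_Ioc, ENNReal.toReal_ofReal (by linarith), sub_zero, smul_eq_mul]
  have hZW : ∫ u in Icc t (1:ℝ), leftQuantile μ Z u = ∫ u in Ioo t (1:ℝ), leftQuantile μ W u := by
    rw [hres]
    exact setIntegral_congr_fun measurableSet_Ioo heq1
  rw [hZW, ← integral_quantile hW, hsplit, hconst]
  ring


section PP
variable {f : Ω → ℝ}
lemma integrable_max_zero (hf : Integrable f μ) : Integrable (fun ω => max (f ω) 0) μ := by
  have := hf.sup (integrable_const (0:ℝ))
  exact this

lemma integral_posPart (hf : Integrable f μ) :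
    ∫ ω, max (f ω) 0 ∂μ = ∫ ω in {ω | 0 < f ω}, f ω ∂μ := by
  have hs : NullMeasurableSet {ω | 0 < f ω} μ :=
    nullMeasurableSet_lt aemeasurable_const hf.aemeasurable
  set t := toMeasurable μ {ω | 0 < f ω} with htdef
  have htm : MeasurableSet t := measurableSet_toMeasurable μ _
  have htae : t =ᵐ[μ] {ω | 0 < f ω} := hs.toMeasurable_ae_eq
  have hmem : ∀ᵐ ω ∂μ, ω ∈ t ↔ 0 < f ω := by
    have := eventuallyEq_set.mp htae
    filter_upwards [this] with ω hω
    exact hω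
  have hmax : Integrable (fun ω => max (f ω) 0) μ := integrable_max_zero hf
  have h1 : ∫ ω in t, max (f ω) 0 ∂μ = ∫ ω in t, f ω ∂μ := by
    refine integral_congr_ae ?_
    filter_upwards [ae_restrict_mem htm, ae_restrict_of_ae hmem] with ω h1 h2
    exact max_eq_left (h2.mp h1).le
  have h2 : ∫ ω in tᶜ, max (f ω) 0 ∂μ = 0 := by
    have : ∫ ω in tᶜ, max (f ω) 0 ∂μ = ∫ ω in tᶜ, (0:ℝ) ∂μ := by
      refine integral_congr_ae ?_
      filter_upwards [ae_restrict_mem htm.compl, ae_restrict_of_ae hmem] with ω h1 h2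
      exact max_eq_right (le_of_not_gt fun h => h1 (h2.mpr h))
    rw [this, integral_zero]
  calc ∫ ω, max (f ω) 0 ∂μ
      = (∫ ω in t, max (f ω) 0 ∂μ) + ∫ ω in tᶜ, max (f ω) 0 ∂μ :=
        (integral_add_compl htm hmax).symm
    _ = ∫ ω in t, f ω ∂μ := by rw [h1, h2, add_zero]
    _ = ∫ ω in {ω | 0 < f ω}, f ω ∂μ := setIntegral_congr_set htae


end PP

lemma toReal_le_of_subset {s t : Set Ω} (h : s ⊆ t) : (μ s).toReal ≤ (μ t).toReal :=
  ENNReal.toReal_mono (measure_ne_top μ _) (measure_mono h)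

lemma toReal_le_of_ae_imp {s t : Set Ω} (h : ∀ᵐ ω ∂μ, ω ∈ s → ω ∈ t) :
    (μ s).toReal ≤ (μ t).toReal :=
  ENNReal.toReal_mono (measure_ne_top μ _) (measure_mono_ae h)

lemma integrable_min_const {f : Ω → ℝ} (hf : Integrable f μ) (c : ℝ) :
    Integrable (fun ω => min (f ω) c) μ := by
  have := hf.inf (integrable_const c)
  exact this

lemma integrable_max_const {f : Ω → ℝ} (hf : Integrable f μ) (c : ℝ) :
    Integrable (fun ω => max (f ω) c) μ := by
  have := hf.sup (integrable_const c)
  exact this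

lemma toReal_compl {s : Set Ω} (hs : NullMeasurableSet s μ) :
    (μ sᶜ).toReal = 1 - (μ s).toReal := by
  rw [prob_compl_eq_one_sub₀ hs]
  rw [ENNReal.toReal_sub_of_le prob_le_one (by simp), ENNReal.toReal_one]


end QP

open QP in
theorem stmt11 {Ω : Type*} [MeasurableSpace Ω] (μ : Measure Ω) [IsProbabilityMeasure μ]
    (n : ℕ) (hn : 2 ≤ n) (X : Ω → ℝ) (hX : Integrable X μ)
    (β : Fin n → ℝ) (hβ : ∀ i, β i ∈ Set.Ioo (0 : ℝ) 1)
    (B : ℝ) (hBdef : B = ∑ i, β i) (hB : B ∈ Set.Ioo (0 : ℝ) 1)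
    (m : ℝ) (hm0 : 0 ≤ m) (hmB : leftQuantile μ X B ≤ m)
    (hmi : ∀ i, leftQuantile μ X (1 - B + β i) ≤ m)
    (U : Ω → ℝ) (hUlaw : Measure.map U μ = volume.restrict (Set.Icc (0 : ℝ) 1))
    (hUX : ∀ᵐ ω ∂μ, leftQuantile μ X (U ω) = X ω)
    (A : Fin n → Set Ω) (hAmeas : ∀ i, MeasurableSet (A i))
    (hdisj : Pairwise (Function.onFun Disjoint A))
    (hunion : (⋃ i, A i) = {ω | U ω ≤ B})
    (hAprob : ∀ i, (μ (A i)).toReal = β i) :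
    (∑ i, avgQuantile μ
        (fun ω => Set.indicator (A i) (fun ω' => X ω' - m) ω
          + Set.indicator {ω' | U ω' ≤ B}ᶜ (fun ω' => X ω' / n) ω
          + Set.indicator ({ω' | U ω' ≤ B} \ A i) (fun _ => m / (n - 1)) ω)
        (Set.Icc 0 (β i) ∪ Set.Icc (1 - B + β i) 1))
      = avgQuantile μ X (Set.Icc 0 B)
        + (1 / B) * ∫ ω in {ω | n * m / (n - 1) < X ω},
            (X ω - n * m / (n - 1)) ∂μ := by
  classical
  obtain ⟨hB0, hB1⟩ := hB
  have hn1 : (1:ℝ) < (n:ℝ) := by exact_mod_cast lt_of_lt_of_le one_lt_two hn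
  have hNpos : (0:ℝ) < (n:ℝ) := lt_trans zero_lt_one hn1
  have hN1pos : (0:ℝ) < (n:ℝ) - 1 := by linarith
  rw [← hunion]
  set SA : Set Ω := ⋃ i, A i with hSA
  set c : ℝ := m / ((n:ℝ) - 1) with hcdef
  set a : ℝ := (n:ℝ) * m / ((n:ℝ) - 1) with hadef
  set qB : ℝ := leftQuantile μ X B with hqBdef
  have hc0 : 0 ≤ c := div_nonneg hm0 hN1pos.le
  have hac : a = (n:ℝ) * c := by rw [hadef, hcdef]; ring
  have hamc : a - m = c := by
    rw [hadef, hcdef]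
    field_simp
    ring
  have hma : m ≤ a := by linarith [hamc, hc0]
  have hcm : c * ((n:ℝ) - 1) = m := by rw [hcdef]; field_simp
  -- β i < B
  have hβiB : ∀ i, β i < B := by
    intro i
    have herase : B = β i + ∑ j ∈ Finset.univ.erase i, β j := by
      rw [hBdef, ← Finset.add_sum_erase _ _ (Finset.mem_univ i)]
    have hne : (Finset.univ.erase i).Nonempty := by
      rw [← Finset.card_pos, Finset.card_erase_of_mem (Finset.mem_univ i), Finset.card_univ,
        Fintype.card_fin]
      omega
    have hpos : 0 < ∑ j ∈ Finset.univ.erase i, β j :=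
      Finset.sum_pos (fun j _ => (hβ j).1) hne
    linarith
  -- U is AEMeasurable
  have hU : AEMeasurable U μ := by
    by_contra h
    rw [Measure.map_of_not_aemeasurable h] at hUlaw
    have h0 : (volume.restrict (Icc (0:ℝ) 1)) univ = 0 := by rw [← hUlaw]; simp
    rw [Measure.restrict_apply_univ, Real.volume_Icc] at h0
    simp at h0
  have hUmap : ∀ s : Set ℝ, MeasurableSet s → μ (U ⁻¹' s) = volume (s ∩ Icc 0 1) := by
    intro s hs
    rw [← Measure.map_apply_of_aemeasurable hU hs, hUlaw, Measure.restrict_apply hs]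
  have hU01 : ∀ᵐ ω ∂μ, U ω ∈ Ioo (0:ℝ) 1 := by
    have h1 : μ (U ⁻¹' (Ioo (0:ℝ) 1)ᶜ) = 0 := by
      rw [hUmap _ measurableSet_Ioo.compl]
      have hsub : (Ioo (0:ℝ) 1)ᶜ ∩ Icc 0 1 ⊆ {0, 1} := by
        intro x hx
        rcases hx with ⟨hx1, hx2⟩
        simp only [mem_compl_iff, mem_Ioo, not_and_or, not_lt] at hx1
        rcases hx1 with h | h
        · left; exact le_antisymm h hx2.1
        · right; exact le_antisymm hx2.2 h
      refine measure_mono_null hsub ?_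
      exact Set.Countable.measure_zero ((countable_singleton (1:ℝ)).insert 0) volume
    rw [ae_iff]
    exact h1
  -- measure of SA and complement
  have hSAmeas : MeasurableSet SA := MeasurableSet.iUnion hAmeas
  have hmuSA : (μ SA).toReal = B := by
    rw [hSA, measure_iUnion hdisj hAmeas, tsum_fintype,
      ENNReal.toReal_sum (fun i _ => measure_ne_top μ _), hBdef]
    exact Finset.sum_congr rfl fun i _ => hAprob i
  have hmuSAc : (μ SAᶜ).toReal = 1 - B := by
    rw [toReal_compl hSAmeas.nullMeasurableSet, hmuSA]
  -- X vs qB on SA / SAᶜ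
  have hXA : ∀ᵐ ω ∂μ, (ω ∈ SA → X ω ≤ qB) ∧ (ω ∉ SA → qB ≤ X ω) := by
    filter_upwards [hUX, hU01] with ω hq hUω
    constructor
    · intro hω
      have hUB : U ω ≤ B := by rw [hunion] at hω; exact hω
      rw [← hq]
      exact quantile_mono hX.aemeasurable hUω.1 hUB hB1
    · intro hω
      have hUB : B < U ω := by
        rw [hunion] at hω
        exact lt_of_not_ge hω
      rw [← hq]
      exact quantile_mono hX.aemeasurable hB0 hUB.le hUω.2
  -- tail measure bound
  have htail : ∀ i, (μ {ω | a < X ω}).toReal ≤ B - β i := by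
    intro i
    have hti0 : (0:ℝ) < 1 - B + β i := by linarith [(hβ i).1]
    have hti1 : 1 - B + β i < 1 := by linarith [hβiB i]
    have hsub : ∀ᵐ ω ∂μ, ω ∈ {ω | a < X ω} → ω ∈ (U ⁻¹' Iic (1 - B + β i))ᶜ := by
      filter_upwards [hUX, hU01] with ω hq hUω
      intro haX hUt
      have hXm : X ω ≤ m := by
        rw [← hq]
        exact le_trans (quantile_mono hX.aemeasurable hUω.1 hUt hti1) (hmi i)
      have haX' : a < X ω := haX
      linarith
    have h2 : (μ ((U ⁻¹' Iic (1 - B + β i))ᶜ)).toReal = B - β i := by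
      rw [← preimage_compl, hUmap _ measurableSet_Iic.compl]
      have : (Iic (1 - B + β i))ᶜ ∩ Icc 0 1 = Ioc (1 - B + β i) 1 := by
        ext x
        simp only [compl_Iic, mem_inter_iff, mem_Ioi, mem_Icc, mem_Ioc]
        constructor
        · rintro ⟨h1, _, h3⟩; exact ⟨h1, h3⟩
        · rintro ⟨h1, h2⟩; exact ⟨h1, by linarith, h2⟩
      rw [this, Real.volume_Ioc, ENNReal.toReal_ofReal (by linarith)]
      ring
    calc (μ {ω | a < X ω}).toReal ≤ (μ ((U ⁻¹' Iic (1 - B + β i))ᶜ)).toReal :=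
          toReal_le_of_ae_imp hsub
      _ = B - β i := h2
  -- G value
  set Gv : ℝ := ∫ ω in {ω | a < X ω}, (X ω - a) ∂μ with hGdef
  have hXa : Integrable (fun ω => X ω - a) μ := hX.sub (integrable_const a)
  have hmax2 : Integrable (fun ω => max (X ω - a) 0) μ :=
    integrable_max_const hXa 0
  have hGv : ∫ ω, max (X ω - a) 0 ∂μ = Gv := by
    rw [integral_posPart hXa]
    have hset : {ω | 0 < X ω - a} = {ω | a < X ω} := by
      ext ω
      simp only [mem_setOf_eq, sub_pos]
    rw [hset, hGdef]
  -- main per-i computation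
  have hmain : ∀ i : Fin n,
      avgQuantile μ
        (fun ω => Set.indicator (A i) (fun ω' => X ω' - m) ω
          + Set.indicator SAᶜ (fun ω' => X ω' / n) ω
          + Set.indicator (SA \ A i) (fun _ => c) ω)
        (Set.Icc 0 (β i) ∪ Set.Icc (1 - B + β i) 1)
      = B⁻¹ * ((∫ ω in A i, (X ω - m) ∂μ) + (B - β i) * c + Gv / n) := by
    intro i
    set Y : Ω → ℝ := fun ω => Set.indicator (A i) (fun ω' => X ω' - m) ω
          + Set.indicator SAᶜ (fun ω' => X ω' / n) ω
          + Set.indicator (SA \ A i) (fun _ => c) ω with hYdef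
    obtain ⟨hβi0, hβi1⟩ := hβ i
    have hti0 : (0:ℝ) < 1 - B + β i := by linarith
    have hti1 : 1 - B + β i < 1 := by linarith [hβiB i]
    -- pointwise values
    have hY1 : ∀ ω ∈ A i, Y ω = X ω - m := by
      intro ω hω
      have h1 : ω ∈ SA := mem_iUnion.mpr ⟨i, hω⟩
      rw [hYdef]
      simp only [indicator_of_mem hω, indicator_of_notMem (show ω ∉ SAᶜ from not_not_intro h1),
        indicator_of_notMem (show ω ∉ SA \ A i from fun h => h.2 hω)]
      ring
    have hY2 : ∀ ω ∈ SA \ A i, Y ω = c := by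
      intro ω hω
      rw [hYdef]
      simp only [indicator_of_notMem hω.2,
        indicator_of_notMem (show ω ∉ SAᶜ from not_not_intro hω.1), indicator_of_mem hω]
      ring
    have hY3 : ∀ ω, ω ∉ SA → Y ω = X ω / n := by
      intro ω hω
      rw [hYdef]
      have h1 : ω ∉ A i := fun h => hω (mem_iUnion.mpr ⟨i, h⟩)
      simp only [indicator_of_notMem h1, indicator_of_mem (mem_compl hω),
        indicator_of_notMem (show ω ∉ SA \ A i from fun h => hω h.1)]
      ring
    -- integrability
    have hYint : Integrable Y μ := by
      rw [hYdef]
      exact (((hX.sub (integrable_const m)).indicator (hAmeas i)).add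
        ((hX.div_const _).indicator hSAmeas.compl)).add
        ((integrable_const c).indicator (hSAmeas.diff (hAmeas i)))
    set c' : ℝ := qB - m with hc'def
    have hc'0 : c' ≤ 0 := by rw [hc'def]; linarith [hmB]
    have hc'div : c' ≤ qB / n := by
      rw [hc'def, le_div_iff₀ hNpos]
      rcases le_or_gt qB 0 with h | h
      · nlinarith
      · nlinarith
    -- a.e. structural facts
    have hYb : ∀ᵐ ω ∂μ, (ω ∈ A i → Y ω ≤ c') ∧ (ω ∉ A i → c' ≤ Y ω) ∧
        (ω ∈ SA → Y ω ≤ c) ∧ (c < Y ω → a < X ω) ∧ (ω ∈ SA → X ω ≤ a) := by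
      filter_upwards [hXA] with ω hXAω
      have hSAYc : ω ∈ SA → Y ω ≤ c := by
        intro hω
        by_cases hωi : ω ∈ A i
        · rw [hY1 ω hωi]
          have := hXAω.1 hω
          linarith [hmB]
        · rw [hY2 ω ⟨hω, hωi⟩]
      refine ⟨?_, ?_, hSAYc, ?_, ?_⟩
      · intro hω
        rw [hY1 ω hω, hc'def]
        have := hXAω.1 (mem_iUnion.mpr ⟨i, hω⟩)
        linarith
      · intro hω
        by_cases hωS : ω ∈ SA
        · rw [hY2 ω ⟨hωS, hω⟩]
          linarith
        · rw [hY3 ω hωS]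
          have hXq := hXAω.2 hωS
          have : qB / (n:ℝ) ≤ X ω / n := by gcongr
          linarith
      · intro hcY
        by_cases hωS : ω ∈ SA
        · exact absurd hcY (not_lt.mpr (hSAYc hωS))
        · rw [hY3 ω hωS] at hcY
          have := (lt_div_iff₀ hNpos).mp hcY
          rw [hac]
          linarith
      · intro hω
        have := hXAω.1 hω
        linarith [hmB]
    -- bottom conditions
    have h1b : (μ {ω | Y ω < c'}).toReal ≤ β i := by
      rw [← hAprob i]
      refine toReal_le_of_ae_imp ?_
      filter_upwards [hYb] with ω hω h
      have h' : Y ω < c' := h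
      by_contra hni
      exact absurd (hω.2.1 hni) (not_le.mpr h')
    have h2b : β i ≤ (μ {ω | Y ω ≤ c'}).toReal := by
      rw [← hAprob i]
      refine toReal_le_of_ae_imp ?_
      filter_upwards [hYb] with ω hω h
      exact hω.1 h
    obtain ⟨hIntB, hValB⟩ := bottom_lemma hYint hβi0 hβi1 h1b h2b
    -- value of ∫ min Y c'
    have hminint := integrable_min_const hYint c'
    have hEmin : ∫ ω, min (Y ω) c' ∂μ = (∫ ω in A i, (X ω - m) ∂μ) + (1 - β i) * c' := by
      rw [← integral_add_compl (hAmeas i) hminint]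
      congr 1
      · refine integral_congr_ae ?_
        filter_upwards [ae_restrict_mem (hAmeas i), ae_restrict_of_ae hYb] with ω h1 h2
        rw [min_eq_left (h2.1 h1), hY1 ω h1]
      · have hcongr : ∀ᵐ ω ∂(μ.restrict (A i)ᶜ), min (Y ω) c' = c' := by
          filter_upwards [ae_restrict_mem (hAmeas i).compl, ae_restrict_of_ae hYb] with ω h1 h2
          exact min_eq_right (h2.2.1 h1)
        rw [integral_congr_ae hcongr, setIntegral_const, measureReal_def,
          toReal_compl (hAmeas i).nullMeasurableSet, hAprob i, smul_eq_mul]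
    -- top conditions
    have h1t : (μ {ω | Y ω < c}).toReal ≤ 1 - B + β i := by
      have hsub : ∀ᵐ ω ∂μ, ω ∈ {ω | Y ω < c} → ω ∈ A i ∪ SAᶜ := by
        filter_upwards [hYb] with ω hω h
        have h' : Y ω < c := h
        by_contra hn
        simp only [mem_union, mem_compl_iff, not_or, not_not] at hn
        rw [hY2 ω ⟨hn.2, hn.1⟩] at h'
        exact lt_irrefl _ h'
      calc (μ {ω | Y ω < c}).toReal ≤ (μ (A i ∪ SAᶜ)).toReal := toReal_le_of_ae_imp hsub
        _ ≤ (μ (A i)).toReal + (μ SAᶜ).toReal := by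
            rw [← ENNReal.toReal_add (measure_ne_top μ _) (measure_ne_top μ _)]
            exact ENNReal.toReal_mono
              (by exact ENNReal.add_ne_top.mpr ⟨measure_ne_top μ _, measure_ne_top μ _⟩)
              (measure_union_le _ _)
        _ ≤ 1 - B + β i := by rw [hAprob i, hmuSAc]; linarith
    have h2t : 1 - B + β i ≤ (μ {ω | Y ω ≤ c}).toReal := by
      have hYmeas : NullMeasurableSet {ω | Y ω ≤ c} μ :=
        hYint.aemeasurable.nullMeasurable measurableSet_Iic
      have hcompl : (μ {ω | Y ω ≤ c}ᶜ).toReal ≤ B - β i := by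
        have hsub : ∀ᵐ ω ∂μ, ω ∈ {ω | Y ω ≤ c}ᶜ → ω ∈ {ω | a < X ω} := by
          filter_upwards [hYb] with ω hω h
          exact hω.2.2.2.1 (lt_of_not_ge h)
        exact le_trans (toReal_le_of_ae_imp hsub) (htail i)
      have hh := toReal_compl hYmeas
      linarith
    obtain ⟨hIntT, hValT⟩ := top_lemma hYint hti0 hti1 h1t h2t
    -- value of ∫ max Y c
    have hmaxint := integrable_max_const hYint c
    have hEmax : ∫ ω, max (Y ω) c ∂μ = B * c + ((1 - B) * c + Gv / n) := by
      rw [← integral_add_compl hSAmeas hmaxint]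
      congr 1
      · have hcongr : ∀ᵐ ω ∂μ.restrict SA, max (Y ω) c = c := by
          filter_upwards [ae_restrict_mem hSAmeas, ae_restrict_of_ae hYb] with ω h1 h2
          exact max_eq_right (h2.2.2.1 h1)
        rw [integral_congr_ae hcongr, setIntegral_const, measureReal_def, hmuSA, smul_eq_mul]
      · have hptw : ∀ᵐ ω ∂μ.restrict SAᶜ, max (Y ω) c = c + (max (X ω - a) 0) / n := by
          filter_upwards [ae_restrict_mem hSAmeas.compl] with ω h1
          rw [hY3 ω h1]
          rcases le_or_gt (X ω) a with h | h
          · rw [max_eq_right (show X ω / (n:ℝ) ≤ c by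
              rw [div_le_iff₀ hNpos]; rw [hac] at h; linarith [mul_comm c (n:ℝ)]),
              max_eq_right (by linarith)]
            simp
          · rw [max_eq_left (show c ≤ X ω / (n:ℝ) by
              rw [le_div_iff₀ hNpos]; rw [hac] at h; linarith [mul_comm c (n:ℝ)]),
              max_eq_left (by linarith)]
            rw [hac]
            field_simp
            ring
        rw [integral_congr_ae hptw,
          integral_add (integrable_const c) ((hmax2.div_const _).integrableOn),
          setIntegral_const, measureReal_def, hmuSAc, smul_eq_mul, integral_div]
        congr 1
        have hSAzero : ∫ ω in SA, max (X ω - a) 0 ∂μ = 0 := by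
          have hcongr : ∀ᵐ ω ∂μ.restrict SA, max (X ω - a) 0 = 0 := by
            filter_upwards [ae_restrict_mem hSAmeas, ae_restrict_of_ae hYb] with ω h1 h2
            exact max_eq_right (by linarith [h2.2.2.2.2 h1])
          rw [integral_congr_ae hcongr, integral_zero]
        have hsplit := integral_add_compl hSAmeas hmax2
        rw [← hGv, ← hsplit, hSAzero, zero_add]
    -- assemble avgQuantile
    have hdisjI : Disjoint (Icc (0:ℝ) (β i)) (Icc (1 - B + β i) 1) := by
      refine disjoint_left.mpr fun x hx hx' => ?_
      have h1 := hx.2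
      have h2 := hx'.1
      linarith
    have hvol : (volume (Icc (0:ℝ) (β i) ∪ Icc (1 - B + β i) 1)).toReal = B := by
      rw [measure_union hdisjI measurableSet_Icc, Real.volume_Icc, Real.volume_Icc,
        ENNReal.toReal_add ENNReal.ofReal_ne_top ENNReal.ofReal_ne_top,
        ENNReal.toReal_ofReal (by linarith), ENNReal.toReal_ofReal (by linarith)]
      ring
    have hIunion : ∫ u in (Icc (0:ℝ) (β i) ∪ Icc (1 - B + β i) 1), leftQuantile μ Y u
        = (∫ u in Icc (0:ℝ) (β i), leftQuantile μ Y u)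
          + ∫ u in Icc (1 - B + β i) (1:ℝ), leftQuantile μ Y u :=
      setIntegral_union hdisjI measurableSet_Icc hIntB hIntT
    simp only [avgQuantile]
    rw [hvol, hIunion, hValB, hValT, hEmin, hEmax]
    ring
  -- sum of the inner integrals over A i
  have hXm : Integrable (fun ω => X ω - m) μ := hX.sub (integrable_const m)
  have hsum1 : ∑ i, ∫ ω in A i, (X ω - m) ∂μ = (∫ ω in SA, X ω ∂μ) - m * B := by
    have hiU := integral_iUnion hAmeas hdisj
      (hXm.integrableOn : IntegrableOn _ (⋃ i, A i) μ)
    rw [tsum_fintype] at hiU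
    rw [← hiU, ← hSA,
      integral_sub hX.integrableOn (integrable_const m), setIntegral_const, measureReal_def, hmuSA, smul_eq_mul]
    ring
  -- RHS: avgQuantile of X over [0,B]
  have hRHS : avgQuantile μ X (Icc 0 B) = B⁻¹ * ∫ ω in SA, X ω ∂μ := by
    have h1X : (μ {ω | X ω < qB}).toReal ≤ B := by
      rw [← hmuSA]
      refine toReal_le_of_ae_imp ?_
      filter_upwards [hXA] with ω hω h
      have h' : X ω < qB := h
      by_contra hn
      exact absurd (hω.2 hn) (not_le.mpr h')
    have h2X : B ≤ (μ {ω | X ω ≤ qB}).toReal := by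
      rw [← hmuSA]
      refine toReal_le_of_ae_imp ?_
      filter_upwards [hXA] with ω hω h
      exact hω.1 h
    obtain ⟨_, hValX⟩ := bottom_lemma hX hB0 hB1 h1X h2X
    have hEminX : ∫ ω, min (X ω) qB ∂μ = (∫ ω in SA, X ω ∂μ) + (1 - B) * qB := by
      rw [← integral_add_compl hSAmeas (integrable_min_const hX qB)]
      congr 1
      · refine integral_congr_ae ?_
        filter_upwards [ae_restrict_mem hSAmeas, ae_restrict_of_ae hXA] with ω h1 h2
        exact min_eq_left (h2.1 h1)
      · have hcongr : ∀ᵐ ω ∂μ.restrict SAᶜ, min (X ω) qB = qB := by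
          filter_upwards [ae_restrict_mem hSAmeas.compl, ae_restrict_of_ae hXA] with ω h1 h2
          exact min_eq_right (h2.2 h1)
        rw [integral_congr_ae hcongr, setIntegral_const, measureReal_def, hmuSAc, smul_eq_mul]
    simp only [avgQuantile]
    rw [Real.volume_Icc, sub_zero, ENNReal.toReal_ofReal hB0.le, hValX, hEminX]
    ring
  simp only [hmain]
  rw [← Finset.mul_sum]
  have hexp : ∑ i, ((∫ ω in A i, (X ω - m) ∂μ) + (B - β i) * c + Gv / n)
      = (∫ ω in SA, X ω ∂μ) + Gv := by
    rw [Finset.sum_add_distrib, Finset.sum_add_distrib, hsum1]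
    have e1 : ∑ i : Fin n, (B - β i) * c = ((n:ℝ) * B - B) * c := by
      rw [← Finset.sum_mul]
      congr 1
      rw [Finset.sum_sub_distrib, ← hBdef, Finset.sum_const, Finset.card_univ, Fintype.card_fin,
        nsmul_eq_mul]
    have e2 : ∑ _i : Fin n, Gv / (n:ℝ) = Gv := by
      rw [Finset.sum_const, Finset.card_univ, Fintype.card_fin, nsmul_eq_mul]
      field_simp
    rw [e1, e2]
    have e3 : ((n:ℝ) * B - B) * c = m * B := by
      calc ((n:ℝ) * B - B) * c = B * (c * ((n:ℝ) - 1)) := by ring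
        _ = m * B := by rw [hcm]; ring
    linarith
  rw [hexp, hRHS, one_div]
  ring
end

section
/- For an integrable random variable X, λ ∈ (0,1), β₁,...,βₙ ∈ (0,1) with β = Σᵢβᵢ ∈ (0,1), and g_{λ,i} as above, the distortion risk measure representation holds: λ·E[X] + (1-λ)·R_{[0,βᵢ]∪[1-β+βᵢ,1]}(X) = ∫_0^1 q_{1-s}^-(X) dg_{λ,i}(s), where the integral is the Lebesgue–Stieltjes integral against g_{λ,i}. -/
open MeasureTheory Set Filter

/-- The inverse-S-shaped distortion function `g_{λ,i}` of the paper, with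
`B = β₁ + ⋯ + βₙ` and `bi = βᵢ`. -/
noncomputable def distortion (lam B bi : ℝ) : ℝ → ℝ := fun s =>
  lam * s + ((1 - lam) / B) *
    (Set.indicator (Set.Ico 0 (1 - bi)) (fun s' => min s' (B - bi)) s
      + Set.indicator (Set.Icc (1 - bi) 1) (fun s' => s' - 1 + B) s)

open ProbabilityTheory in
lemma exists_quantile_rep {Ω : Type*} [MeasurableSpace Ω] (μ : Measure Ω)
    [IsProbabilityMeasure μ] (X : Ω → ℝ) (hX : Integrable X μ) :
    ∃ q1 : ℝ → ℝ, Measurable q1 ∧ Set.EqOn q1 (leftQuantile μ X) (Set.Ioo 0 1) ∧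
      IntegrableOn q1 (Set.Ioo (0:ℝ) 1) volume ∧
      ∫ u in Set.Ioo (0:ℝ) 1, q1 u = ∫ ω, X ω ∂μ := by
  classical
  set X' := hX.1.mk X with hX'def
  have hX'm : StronglyMeasurable X' := hX.1.stronglyMeasurable_mk
  have hXX' : X =ᵐ[μ] X' := hX.1.ae_eq_mk
  set law := μ.map X' with hlaw
  haveI : IsProbabilityMeasure law := Measure.isProbabilityMeasure_map hX'm.measurable.aemeasurable
  set F := cdf law with hFdef
  have hsets : ∀ u : ℝ, {x : ℝ | u ≤ (μ {ω | X ω ≤ x}).toReal} = {x | u ≤ F x} := by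
    intro u; ext x
    have h1 : μ {ω | X ω ≤ x} = law (Iic x) := by
      rw [hlaw, Measure.map_apply hX'm.measurable measurableSet_Iic]
      refine measure_congr ?_
      filter_upwards [hXX'] with ω h
      show (X ω ≤ x) = (X' ω ≤ x)
      rw [h]
    simp only [Set.mem_setOf_eq, h1, hFdef, cdf_eq_real, measureReal_def]
  have hq : ∀ u : ℝ, leftQuantile μ X u = sInf {x | u ≤ F x} := fun u => by
    rw [leftQuantile, hsets u]
  have hne : ∀ u : ℝ, u < 1 → {x | u ≤ F x}.Nonempty := by
    intro u hu
    obtain ⟨x, hx⟩ := ((tendsto_cdf_atTop law).eventually (eventually_ge_nhds hu)).exists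
    exact ⟨x, hx⟩
  have hbdd : ∀ u : ℝ, 0 < u → BddBelow {x | u ≤ F x} := by
    intro u hu
    obtain ⟨x0, hx0⟩ := ((tendsto_cdf_atBot law).eventually (eventually_lt_nhds hu)).exists
    refine ⟨x0, fun y hy => le_of_not_gt fun hlt => ?_⟩
    have : F y ≤ F x0 := (cdf law).mono hlt.le
    have : u ≤ F x0 := le_trans hy this
    linarith
  have hkey : ∀ u : ℝ, u ∈ Ioo (0:ℝ) 1 → u ≤ F (sInf {x | u ≤ F x}) := by
    intro u hu
    by_contra h
    push_neg at h
    have hev : ∀ᶠ y in nhdsWithin (sInf {x | u ≤ F x}) (Ici (sInf {x | u ≤ F x})),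
        F y < u :=
      ((cdf law).right_continuous (sInf {x | u ≤ F x})).eventually (eventually_lt_nhds h)
    have hclos : sInf {x | u ≤ F x} ∈ closure {x | u ≤ F x} :=
      csInf_mem_closure (hne u hu.2) (hbdd u hu.1)
    have hnebot : (nhdsWithin (sInf {x | u ≤ F x}) {x | u ≤ F x}).NeBot :=
      mem_closure_iff_nhdsWithin_neBot.1 hclos
    have hmono : nhdsWithin (sInf {x | u ≤ F x}) {x | u ≤ F x}
        ≤ nhdsWithin (sInf {x | u ≤ F x}) (Ici (sInf {x | u ≤ F x})) :=
      nhdsWithin_mono _ (fun y hy => csInf_le (hbdd u hu.1) hy)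
    obtain ⟨y, hy1, hy2⟩ := ((hev.filter_mono hmono).and eventually_mem_nhdsWithin).exists
    exact absurd hy2 (by simp only [Set.mem_setOf_eq, not_le]; exact hy1)
  have hgal : ∀ u ∈ Ioo (0:ℝ) 1, ∀ x : ℝ, (leftQuantile μ X u ≤ x ↔ u ≤ F x) := by
    intro u hu x
    rw [hq]
    constructor
    · intro hle
      exact le_trans (hkey u hu) ((cdf law).mono hle)
    · intro hle
      exact csInf_le (hbdd u hu.1) hle
  set q1 : ℝ → ℝ := fun u => if u ∈ Ioo (0:ℝ) 1 then leftQuantile μ X u else 0 with hq1def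
  have hq1eq : Set.EqOn q1 (leftQuantile μ X) (Ioo 0 1) := fun u hu => by
    simp only [hq1def, if_pos hu]
  have hmeas : Measurable q1 := by
    refine measurable_of_Iic fun x => ?_
    by_cases hx : (0:ℝ) ≤ x
    · have h : q1 ⁻¹' Iic x = (Ioo 0 1 ∩ Iic (F x)) ∪ (Ioo (0:ℝ) 1)ᶜ := by
        ext u
        by_cases hu : u ∈ Ioo (0:ℝ) 1
        · simp only [mem_preimage, mem_Iic, hq1def, if_pos hu, mem_union, mem_inter_iff, hu,
            true_and, mem_compl_iff, not_true_eq_false, or_false]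
          exact hgal u hu x
        · have hu' : ¬(0 < u ∧ u < 1) := by simpa [Set.mem_Ioo] using hu
          simp [hq1def, hu', hu, hx]
      rw [h]
      exact (measurableSet_Ioo.inter measurableSet_Iic).union measurableSet_Ioo.compl
    · have h : q1 ⁻¹' Iic x = Ioo 0 1 ∩ Iic (F x) := by
        ext u
        by_cases hu : u ∈ Ioo (0:ℝ) 1
        · simp only [mem_preimage, mem_Iic, hq1def, if_pos hu, mem_inter_iff, hu, true_and]
          exact hgal u hu x
        · have hu' : ¬(0 < u ∧ u < 1) := by simpa [Set.mem_Ioo] using hu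
          simp [hq1def, hu', hu, hx]
      rw [h]
      exact measurableSet_Ioo.inter measurableSet_Iic
  have hvol : ∀ t : ℝ, 0 ≤ t → t ≤ 1 → volume (Ioo (0:ℝ) 1 ∩ Iic t) = ENNReal.ofReal t := by
    intro t h0 h1
    rcases lt_or_eq_of_le h1 with h | h
    · have heq : Ioo (0:ℝ) 1 ∩ Iic t = Ioc 0 t := by
        ext y
        constructor
        · rintro ⟨⟨hy0, _⟩, hyt⟩; exact ⟨hy0, hyt⟩
        · rintro ⟨hy0, hyt⟩; exact ⟨⟨hy0, lt_of_le_of_lt hyt h⟩, hyt⟩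
      rw [heq, Real.volume_Ioc, sub_zero]
    · have heq : Ioo (0:ℝ) 1 ∩ Iic t = Ioo 0 1 := by
        apply inter_eq_left.2
        intro y hy
        exact le_trans hy.2.le (le_of_eq h.symm)
      rw [heq, Real.volume_Ioo, ← h]
      norm_num
  have hmap : Measure.map q1 (volume.restrict (Ioo (0:ℝ) 1)) = law := by
    haveI : IsFiniteMeasure (Measure.map q1 (volume.restrict (Ioo (0:ℝ) 1))) := by
      constructor
      rw [Measure.map_apply hmeas MeasurableSet.univ]
      simp only [preimage_univ]
      rw [Measure.restrict_apply' measurableSet_Ioo, univ_inter, Real.volume_Ioo]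
      norm_num
    refine Measure.ext_of_Iic _ _ fun x => ?_
    rw [Measure.map_apply hmeas measurableSet_Iic, Measure.restrict_apply' measurableSet_Ioo]
    have hpre : q1 ⁻¹' Iic x ∩ Ioo 0 1 = Ioo 0 1 ∩ Iic (F x) := by
      ext u
      constructor
      · rintro ⟨hu1, hu2⟩
        refine ⟨hu2, ?_⟩
        have : q1 u ≤ x := hu1
        rw [hq1eq hu2] at this
        exact (hgal u hu2 x).1 this
      · rintro ⟨hu1, hu2⟩
        refine ⟨?_, hu1⟩
        show q1 u ≤ x
        rw [hq1eq hu1]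
        exact (hgal u hu1 x).2 hu2
    rw [hpre, hvol (F x) (cdf_nonneg law x) (cdf_le_one law x), hFdef, ofReal_cdf]
  have hlawint : Integrable (fun x : ℝ => x) law := by
    rw [hlaw]
    exact (integrable_map_measure aestronglyMeasurable_id
      hX'm.measurable.aemeasurable).2 (hX.congr hXX')
  have hq1int : Integrable q1 (volume.restrict (Ioo (0:ℝ) 1)) := by
    rw [← hmap] at hlawint
    exact (integrable_map_measure aestronglyMeasurable_id hmeas.aemeasurable).1 hlawint
  have hq1val : ∫ u in Ioo (0:ℝ) 1, q1 u = ∫ ω, X ω ∂μ := by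
    have h1 : ∫ x : ℝ, x ∂law = ∫ ω, X ω ∂μ := by
      rw [hlaw]
      have h2 : ∫ x : ℝ, x ∂(μ.map X') = ∫ ω, X' ω ∂μ :=
        integral_map hX'm.measurable.aemeasurable aestronglyMeasurable_id
      rw [h2]
      exact (integral_congr_ae hXX').symm
    have h3 : ∫ x : ℝ, x ∂law = ∫ u in Ioo (0:ℝ) 1, q1 u := by
      rw [← hmap]
      exact integral_map hmeas.aemeasurable aestronglyMeasurable_id
    rw [← h3, h1]
  exact ⟨q1, hmeas, hq1eq, hq1int, hq1val⟩

theorem stmt13 {Ω : Type*} [MeasurableSpace Ω] (μ : Measure Ω) [IsProbabilityMeasure μ]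
    (X : Ω → ℝ) (hX : Integrable X μ)
    (lam : ℝ) (hlam : lam ∈ Set.Ioo (0 : ℝ) 1)
    (n : ℕ) (β : Fin n → ℝ) (hβ : ∀ i, β i ∈ Set.Ioo (0 : ℝ) 1)
    (B : ℝ) (hBdef : B = ∑ i, β i) (hB : B ∈ Set.Ioo (0 : ℝ) 1) (i : Fin n)
    (G : StieltjesFunction ℝ) (hG : ∀ s ∈ Set.Icc (0 : ℝ) 1, G s = distortion lam B (β i) s) :
    lam * ∫ ω, X ω ∂μ
      + (1 - lam) * avgQuantile μ X (Set.Icc 0 (β i) ∪ Set.Icc (1 - B + β i) 1)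
      = ∫ s in Set.Ioc (0 : ℝ) 1, leftQuantile μ X (1 - s) ∂G.measure := by
  obtain ⟨q1, hq1m, hq1eq, hq1int, hq1val⟩ := exists_quantile_rep μ X hX
  have hbi0 : 0 < β i := (hβ i).1
  have hbi1 : β i < 1 := (hβ i).2
  have hB0 : 0 < B := hB.1
  have hB1 : B < 1 := hB.2
  have hbiB : β i ≤ B := by
    rw [hBdef]
    exact Finset.single_le_sum (fun j _ => (hβ j).1.le) (Finset.mem_univ i)
  have hlam0 : 0 < lam := hlam.1
  have hlam1 : lam < 1 := hlam.2
  have hc0 : 0 ≤ (1 - lam) / B := div_nonneg (by linarith) hB0.le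
  have hK0 : (0:ℝ) ≤ B - β i := by linarith
  have hK1 : B - β i ≤ 1 := by linarith
  have hKL : B - β i ≤ 1 - β i := by linarith
  have hL0 : (0:ℝ) ≤ 1 - β i := by linarith
  have hL1 : 1 - β i ≤ 1 := by linarith
  -- closed form of G on [0,1]
  have hφ : ∀ s ∈ Icc (0:ℝ) 1, G s = lam * s + ((1 - lam) / B) * min s (B - β i)
      + ((1 - lam) / B) * max (s - (1 - β i)) 0 := by
    intro s hs
    rw [hG s hs]
    unfold distortion
    rcases lt_or_ge s (1 - β i) with h | h
    · rw [indicator_of_mem (show s ∈ Ico (0:ℝ) (1 - β i) from ⟨hs.1, h⟩),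
        indicator_of_notMem (show s ∉ Icc (1 - β i) 1 from fun hc => absurd hc.1 (not_le.2 h)),
        max_eq_right (by linarith : s - (1 - β i) ≤ 0)]
      ring
    · rw [indicator_of_notMem
          (show s ∉ Ico (0:ℝ) (1 - β i) from fun hc => absurd hc.2 (not_lt.2 h)),
        indicator_of_mem (show s ∈ Icc (1 - β i) 1 from ⟨h, hs.2⟩),
        min_eq_right (le_trans hKL h), max_eq_left (by linarith : (0:ℝ) ≤ s - (1 - β i))]
      ring
  have hORmax : ∀ p : ℝ, ENNReal.ofReal p = ENNReal.ofReal (max p 0) := by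
    intro p
    rcases le_total p 0 with h | h
    · rw [ENNReal.ofReal_of_nonpos h, max_eq_right h, ENNReal.ofReal_zero]
    · rw [max_eq_left h]
  have hOR : ∀ p q : ℝ, max p 0 = max q 0 → ENNReal.ofReal p = ENNReal.ofReal q := by
    intro p q h
    rw [hORmax p, hORmax q, h]
  have hmm : ∀ t : ℝ, 0 ≤ t → ∀ x y : ℝ, max x 0 = max y 0 → max (t * x) 0 = max (t * y) 0 := by
    intro t ht x y h
    rw [← mul_zero t, ← mul_max_of_nonneg x 0 ht, ← mul_max_of_nonneg y 0 ht, h]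
  -- measure decomposition
  have hGν : G.measure.restrict (Ioc 0 1)
      = (ENNReal.ofReal lam) • volume.restrict (Ioc 0 1)
        + (ENNReal.ofReal ((1 - lam) / B)) • volume.restrict (Ioc 0 (B - β i))
        + (ENNReal.ofReal ((1 - lam) / B)) • volume.restrict (Ioc (1 - β i) 1) := by
    refine Measure.ext_of_Ioc' _ _ (fun a b _ => ?_) (fun a b hab => ?_)
    · exact ((Measure.restrict_apply_le _ _).trans_lt
        (by rw [StieltjesFunction.measure_Ioc]; exact ENNReal.ofReal_lt_top)).ne
    · set A := min 1 (max a 0) with hAdef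
      set Bb := min 1 (max b 0) with hBbdef
      have hA0 : 0 ≤ A := le_min zero_le_one (le_max_right a 0)
      have hA1 : A ≤ 1 := min_le_left _ _
      have hBb0 : 0 ≤ Bb := le_min zero_le_one (le_max_right b 0)
      have hBb1 : Bb ≤ 1 := min_le_left _ _
      have hAB : A ≤ Bb := min_le_min le_rfl (max_le_max hab.le le_rfl)
      have hinter : Ioc a b ∩ Ioc (0:ℝ) 1 = Ioc A Bb := by
        rw [Ioc_inter_Ioc]
        ext y
        simp only [hAdef, hBbdef, mem_Ioc, sup_lt_iff, lt_sup_iff, max_lt_iff, min_lt_iff,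
          lt_min_iff, le_min_iff, min_le_iff, le_max_iff, max_le_iff]
        constructor
        · rintro ⟨⟨hay, h0y⟩, hyb, hy1⟩
          exact ⟨Or.inr ⟨hay, h0y⟩, hy1, Or.inl hyb⟩
        · rintro ⟨h1, hy1, h2⟩
          rcases h1 with h1 | ⟨hay, h0y⟩
          · linarith
          rcases h2 with h2 | h2
          · exact ⟨⟨hay, h0y⟩, h2, hy1⟩
          · linarith
      have hint2 : Ioc a b ∩ Ioc (0:ℝ) (B - β i) = Ioc A (min Bb (B - β i)) := by
        rw [show Ioc (0:ℝ) (B - β i) = Ioc 0 1 ∩ Ioc 0 (B - β i) from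
            (inter_eq_right.2 (Ioc_subset_Ioc le_rfl hK1)).symm,
          ← inter_assoc, hinter, Ioc_inter_Ioc, sup_eq_left.2 hA0]
      have hint3 : Ioc a b ∩ Ioc (1 - β i) 1 = Ioc (max A (1 - β i)) Bb := by
        rw [show Ioc (1 - β i) 1 = Ioc 0 1 ∩ Ioc (1 - β i) 1 from
            (inter_eq_right.2 (Ioc_subset_Ioc hL0 le_rfl)).symm,
          ← inter_assoc, hinter, Ioc_inter_Ioc, inf_eq_left.2 hBb1]
      have hn1 : 0 ≤ lam * (Bb - A) := mul_nonneg hlam0.le (sub_nonneg.2 hAB)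
      have hn2 : 0 ≤ (1 - lam) / B * (min Bb (B - β i) - min A (B - β i)) :=
        mul_nonneg hc0 (sub_nonneg.2 (min_le_min hAB le_rfl))
      have hn3 : 0 ≤ (1 - lam) / B
          * (max (Bb - (1 - β i)) 0 - max (A - (1 - β i)) 0) :=
        mul_nonneg hc0 (sub_nonneg.2 (max_le_max (sub_le_sub_right hAB _) le_rfl))
      have e2 : ENNReal.ofReal ((1 - lam) / B * (min Bb (B - β i) - A))
          = ENNReal.ofReal ((1 - lam) / B * (min Bb (B - β i) - min A (B - β i))) := by
        rcases le_total A (B - β i) with h | h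
        · rw [min_eq_left h]
        · rw [min_eq_right h, min_eq_right (h.trans hAB), sub_self, mul_zero,
            ENNReal.ofReal_zero,
            ENNReal.ofReal_of_nonpos (mul_nonpos_iff.2 (Or.inl ⟨hc0, by linarith⟩))]
      have e3 : ENNReal.ofReal ((1 - lam) / B * (Bb - max A (1 - β i)))
          = ENNReal.ofReal ((1 - lam) / B
              * (max (Bb - (1 - β i)) 0 - max (A - (1 - β i)) 0)) := by
        rcases le_total (1 - β i) A with h | h
        · rw [max_eq_left h, max_eq_left (by linarith : (0:ℝ) ≤ A - (1 - β i)),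
            max_eq_left ((by linarith : (0:ℝ) ≤ Bb - (1 - β i)))]
          congr 1
          ring
        · rw [max_eq_right h, max_eq_right (by linarith : A - (1 - β i) ≤ 0)]
          rcases le_total Bb (1 - β i) with h2 | h2
          · rw [max_eq_right (by linarith : Bb - (1 - β i) ≤ 0), sub_zero, mul_zero,
              ENNReal.ofReal_zero,
              ENNReal.ofReal_of_nonpos (mul_nonpos_iff.2 (Or.inl ⟨hc0, by linarith⟩))]
          · rw [max_eq_left (by linarith : (0:ℝ) ≤ Bb - (1 - β i)), sub_zero]
      rw [Measure.restrict_apply' measurableSet_Ioc, hinter, StieltjesFunction.measure_Ioc,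
        hφ _ ⟨hBb0, hBb1⟩, hφ _ ⟨hA0, hA1⟩]
      simp only [Measure.coe_add, Pi.add_apply, Measure.smul_apply, smul_eq_mul]
      rw [Measure.restrict_apply' measurableSet_Ioc, Measure.restrict_apply' measurableSet_Ioc,
        Measure.restrict_apply' measurableSet_Ioc, hinter, hint2, hint3,
        Real.volume_Ioc, Real.volume_Ioc, Real.volume_Ioc,
        ← ENNReal.ofReal_mul hlam0.le, ← ENNReal.ofReal_mul hc0, ← ENNReal.ofReal_mul hc0,
        e2, e3, ← ENNReal.ofReal_add hn1 hn2, ← ENNReal.ofReal_add (add_nonneg hn1 hn2) hn3]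
      congr 1
      ring
  -- integrability and values of the quantile integrals
  have hrIoo : volume.restrict (Ioc (0:ℝ) 1) = volume.restrict (Ioo (0:ℝ) 1) :=
    (Measure.restrict_congr_set Ioo_ae_eq_Ioc).symm
  have hqIoo : IntegrableOn (leftQuantile μ X) (Ioo (0:ℝ) 1) volume :=
    hq1int.congr ((ae_restrict_mem measurableSet_Ioo).mono fun u hu => hq1eq hu)
  have hqIoc : IntegrableOn (leftQuantile μ X) (Ioc (0:ℝ) 1) volume := by
    unfold IntegrableOn
    rw [hrIoo]
    exact hqIoo
  have hqIocval : ∫ u in Ioc (0:ℝ) 1, leftQuantile μ X u = ∫ ω, X ω ∂μ := by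
    rw [integral_Ioc_eq_integral_Ioo, ← hq1val]
    exact setIntegral_congr_fun measurableSet_Ioo fun u hu => (hq1eq hu).symm
  have hII : IntervalIntegrable (leftQuantile μ X) volume 0 1 :=
    (intervalIntegrable_iff_integrableOn_Ioc_of_le zero_le_one).2 hqIoc
  have hIIf : IntervalIntegrable (fun s => leftQuantile μ X (1 - s)) volume 0 1 := by
    have h := (hII.comp_sub_left 1).symm
    simpa using h
  have hfIoc : IntegrableOn (fun s => leftQuantile μ X (1 - s)) (Ioc (0:ℝ) 1) volume :=
    (intervalIntegrable_iff_integrableOn_Ioc_of_le zero_le_one).1 hIIf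
  have hfK : IntegrableOn (fun s => leftQuantile μ X (1 - s)) (Ioc (0:ℝ) (B - β i)) volume :=
    hfIoc.mono_set (Ioc_subset_Ioc le_rfl hK1)
  have hfL : IntegrableOn (fun s => leftQuantile μ X (1 - s)) (Ioc (1 - β i) 1) volume :=
    hfIoc.mono_set (Ioc_subset_Ioc hL0 le_rfl)
  have hcs : ∀ a b : ℝ, (∫ s in a..b, leftQuantile μ X (1 - s))
      = ∫ u in (1 - b)..(1 - a), leftQuantile μ X u :=
    fun a b => intervalIntegral.integral_comp_sub_left (leftQuantile μ X) 1
  have hv1 : ∫ s in Ioc (0:ℝ) 1, leftQuantile μ X (1 - s) = ∫ ω, X ω ∂μ := by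
    rw [← intervalIntegral.integral_of_le zero_le_one, hcs 0 1,
      show (1:ℝ) - 1 = 0 from by norm_num, show (1:ℝ) - 0 = 1 from by norm_num,
      intervalIntegral.integral_of_le zero_le_one]
    exact hqIocval
  have hv2 : ∫ s in Ioc (0:ℝ) (B - β i), leftQuantile μ X (1 - s)
      = ∫ u in Ioc (1 - B + β i) 1, leftQuantile μ X u := by
    rw [← intervalIntegral.integral_of_le hK0, hcs 0 (B - β i),
      show (1:ℝ) - (B - β i) = 1 - B + β i from by ring,
      show (1:ℝ) - 0 = 1 from by norm_num,
      intervalIntegral.integral_of_le (by linarith : (1:ℝ) - B + β i ≤ 1)]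
  have hv3 : ∫ s in Ioc (1 - β i) 1, leftQuantile μ X (1 - s)
      = ∫ u in Ioc (0:ℝ) (β i), leftQuantile μ X u := by
    rw [← intervalIntegral.integral_of_le hL1, hcs (1 - β i) 1,
      show (1:ℝ) - 1 = 0 from by norm_num,
      show (1:ℝ) - (1 - β i) = β i from by ring,
      intervalIntegral.integral_of_le hbi0.le]
  -- the averaged quantile
  have hdisj : Disjoint (Icc (0:ℝ) (β i)) (Icc (1 - B + β i) 1) :=
    Set.disjoint_left.2 fun x hx1 hx2 => by
      have h1 := hx1.2; have h2 := hx2.1; linarith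
  have hIvol : volume (Icc (0:ℝ) (β i) ∪ Icc (1 - B + β i) 1) = ENNReal.ofReal B := by
    rw [measure_union hdisj measurableSet_Icc, Real.volume_Icc, Real.volume_Icc,
      ← ENNReal.ofReal_add (by linarith) (by linarith)]
    congr 1; ring
  have hint1 : IntegrableOn (leftQuantile μ X) (Icc (0:ℝ) (β i)) volume := by
    rw [integrableOn_Icc_iff_integrableOn_Ioc]
    exact hqIoc.mono_set (Ioc_subset_Ioc le_rfl hbi1.le)
  have hint2 : IntegrableOn (leftQuantile μ X) (Icc (1 - B + β i) 1) volume := by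
    rw [integrableOn_Icc_iff_integrableOn_Ioc]
    exact hqIoc.mono_set (Ioc_subset_Ioc (by linarith) le_rfl)
  have hunion : ∫ u in (Icc (0:ℝ) (β i) ∪ Icc (1 - B + β i) 1), leftQuantile μ X u
      = (∫ u in Ioc (0:ℝ) (β i), leftQuantile μ X u)
        + ∫ u in Ioc (1 - B + β i) 1, leftQuantile μ X u := by
    rw [setIntegral_union hdisj measurableSet_Icc hint1 hint2,
      integral_Icc_eq_integral_Ioc, integral_Icc_eq_integral_Ioc]
  -- put the right-hand side together
  have h1i : Integrable (fun s => leftQuantile μ X (1 - s))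
      ((ENNReal.ofReal lam) • volume.restrict (Ioc (0:ℝ) 1)) :=
    hfIoc.smul_measure ENNReal.ofReal_ne_top
  have h2i : Integrable (fun s => leftQuantile μ X (1 - s))
      ((ENNReal.ofReal ((1 - lam) / B)) • volume.restrict (Ioc (0:ℝ) (B - β i))) :=
    hfK.smul_measure ENNReal.ofReal_ne_top
  have h3i : Integrable (fun s => leftQuantile μ X (1 - s))
      ((ENNReal.ofReal ((1 - lam) / B)) • volume.restrict (Ioc (1 - β i) 1)) :=
    hfL.smul_measure ENNReal.ofReal_ne_top
  have hre : (∫ s in Ioc (0:ℝ) 1, leftQuantile μ X (1 - s) ∂G.measure)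
      = lam * (∫ ω, X ω ∂μ)
        + (1 - lam) / B * (∫ u in Ioc (1 - B + β i) 1, leftQuantile μ X u)
        + (1 - lam) / B * (∫ u in Ioc (0:ℝ) (β i), leftQuantile μ X u) := by
    rw [show (∫ s in Ioc (0:ℝ) 1, leftQuantile μ X (1 - s) ∂G.measure)
        = ∫ s, leftQuantile μ X (1 - s) ∂(G.measure.restrict (Ioc 0 1)) from rfl, hGν,
      integral_add_measure (h1i.add_measure h2i) h3i, integral_add_measure h1i h2i,
      integral_smul_measure, integral_smul_measure, integral_smul_measure,
      ENNReal.toReal_ofReal hlam0.le, ENNReal.toReal_ofReal hc0, smul_eq_mul, smul_eq_mul,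
      smul_eq_mul, hv1, hv2, hv3]
  rw [hre, avgQuantile, hIvol, ENNReal.toReal_ofReal hB0.le, hunion]
  field_simp
  ring
end

section
/- Let X₁, X₂ be random variables, S = X₁ + X₂, and 0 < r < r+s ≤ 1. Suppose there exist uniform transforms U_{X₁}, U_{X₂}, U_S (each ~ Uniform[0,1], with q_{U_Y}^-(Y) = Y a.s. for the respective Y) and β₁, β₂ > 0 with β₁ + β₂ = β ∈ (0,1) such that {U_S ≤ β} = {U_{X₁} ∈ [0,β₁] ∪ [1-β+β₁, 1]} = {U_{X₂} ∈ [0,β₂] ∪ [1-β+β₂, 1]} (as events up to null sets). Then R_{[0,β]}(S) = R_{[0,β₁]∪[1-β+β₁,1]}(X₁) + R_{[0,β₂]∪[1-β+β₂,1]}(X₂). -/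
open MeasureTheory Set Filter Topology ENNReal

lemma aux_aemeasurable_of_law {Ω : Type*} [MeasurableSpace Ω] {μ : Measure Ω} {U : Ω → ℝ}
    (hlaw : Measure.map U μ = volume.restrict (Set.Icc (0 : ℝ) 1)) :
    AEMeasurable U μ := by
  by_contra h
  rw [Measure.map_of_not_aemeasurable h] at hlaw
  have := congrArg (fun m : Measure ℝ => m (Set.Icc 0 1)) hlaw
  simp [Real.volume_Icc, Measure.restrict_apply measurableSet_Icc] at this

lemma aux_monotoneOn {Ω : Type*} [MeasurableSpace Ω] (μ : Measure Ω) [IsProbabilityMeasure μ]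
    (X : Ω → ℝ) (hX : AEMeasurable X μ) :
    MonotoneOn (leftQuantile μ X) (Set.Ioo (0 : ℝ) 1) := by
  intro u hu v hv huv
  set F : ℝ → ℝ := fun x => (μ {ω | X ω ≤ x}).toReal with hF
  have Fmono : Monotone F := by
    intro a b hab
    exact ENNReal.toReal_mono (measure_ne_top μ _)
      (measure_mono (fun ω hω => le_trans hω hab))
  -- bounded below for u > 0
  have hlow : ∃ x : ℝ, F x < u := by
    have htend : Tendsto (fun n : ℕ => μ (X ⁻¹' Set.Iic (-(n : ℝ)))) atTop
        (𝓝 (μ (⋂ n : ℕ, X ⁻¹' Set.Iic (-(n : ℝ))))) :=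
      tendsto_measure_iInter_atTop
        (fun n => (hX.nullMeasurable measurableSet_Iic))
        (fun n m hnm => preimage_mono (Set.Iic_subset_Iic.2 (by
          simp only [neg_le_neg_iff]; exact_mod_cast hnm)))
        ⟨0, measure_ne_top μ _⟩
    have hempty : (⋂ n : ℕ, X ⁻¹' Set.Iic (-(n : ℝ))) = ∅ := by
      ext ω
      simp only [Set.mem_iInter, Set.mem_preimage, Set.mem_Iic, Set.mem_empty_iff_false,
        iff_false, not_forall, not_le]
      obtain ⟨n, hn⟩ := exists_nat_gt (-(X ω))
      exact ⟨n, by linarith⟩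
    rw [hempty, measure_empty] at htend
    have := htend.eventually (eventually_lt_nhds (show (0:ℝ≥0∞) < ENNReal.ofReal u from
      ENNReal.ofReal_pos.2 hu.1))
    obtain ⟨n, hn⟩ := this.exists
    refine ⟨-(n : ℝ), ?_⟩
    have : μ {ω | X ω ≤ -(n : ℝ)} < ENNReal.ofReal u := hn
    calc F (-(n : ℝ)) < (ENNReal.ofReal u).toReal :=
          ENNReal.toReal_strict_mono ENNReal.ofReal_ne_top this
      _ = u := ENNReal.toReal_ofReal hu.1.le
  have hup : ∃ x : ℝ, v ≤ F x := by
    have htend : Tendsto (fun n : ℕ => μ (X ⁻¹' Set.Iic (n : ℝ))) atTop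
        (𝓝 (μ (⋃ n : ℕ, X ⁻¹' Set.Iic (n : ℝ)))) :=
      tendsto_measure_iUnion_atTop (fun n m hnm => preimage_mono (Set.Iic_subset_Iic.2
        (by exact_mod_cast hnm)))
    have huniv : (⋃ n : ℕ, X ⁻¹' Set.Iic (n : ℝ)) = Set.univ := by
      ext ω
      simp only [Set.mem_iUnion, Set.mem_preimage, Set.mem_Iic, Set.mem_univ, iff_true]
      obtain ⟨n, hn⟩ := exists_nat_gt (X ω)
      exact ⟨n, hn.le⟩
    rw [huniv, measure_univ] at htend
    have := htend.eventually (eventually_gt_nhds (show ENNReal.ofReal v < 1 by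
      rw [show (1 : ℝ≥0∞) = ENNReal.ofReal 1 by simp]
      exact ENNReal.ofReal_lt_ofReal_iff_of_nonneg (le_of_lt hv.1) |>.2 hv.2))
    obtain ⟨n, hn⟩ := this.exists
    refine ⟨(n : ℝ), ?_⟩
    have h1 : ENNReal.ofReal v ≤ μ {ω | X ω ≤ (n : ℝ)} := le_of_lt hn
    have := ENNReal.toReal_mono (measure_ne_top μ _) h1
    rwa [ENNReal.toReal_ofReal hv.1.le] at this
  obtain ⟨x₀, hx₀⟩ := hlow
  obtain ⟨x₁, hx₁⟩ := hup
  have hbdd : BddBelow {x : ℝ | u ≤ F x} := by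
    refine ⟨x₀, fun y hy => ?_⟩
    by_contra hcon
    push_neg at hcon
    exact absurd hy (not_le.2 (lt_of_le_of_lt (Fmono hcon.le) hx₀))
  have hne : ({x : ℝ | v ≤ F x}).Nonempty := ⟨x₁, hx₁⟩
  exact csInf_le_csInf hbdd hne (fun x hx => le_trans huv hx)

lemma aux_setIntegral {Ω : Type*} [MeasurableSpace Ω] (μ : Measure Ω) [IsProbabilityMeasure μ]
    (X U : Ω → ℝ) (hX : Integrable X μ)
    (hlaw : Measure.map U μ = volume.restrict (Set.Icc (0 : ℝ) 1))
    (hq : ∀ᵐ ω ∂μ, leftQuantile μ X (U ω) = X ω)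
    (I : Set ℝ) (hI : MeasurableSet I) (hIsub : I ⊆ Set.Icc 0 1) :
    ∫ u in I, leftQuantile μ X u = ∫ ω in U ⁻¹' I, X ω ∂μ := by
  have hU : AEMeasurable U μ := aux_aemeasurable_of_law hlaw
  have hmono := aux_monotoneOn μ X hX.aemeasurable
  have hqm : AEMeasurable (leftQuantile μ X) (Measure.map U μ) := by
    rw [hlaw, ← Measure.restrict_congr_set (Ioo_ae_eq_Icc (μ := volume) (a := (0:ℝ)) (b := 1))]
    exact aemeasurable_restrict_of_monotoneOn measurableSet_Ioo hmono
  calc ∫ u in I, leftQuantile μ X u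
      = ∫ u in I, leftQuantile μ X u ∂(Measure.map U μ) := by
        rw [hlaw, Measure.restrict_restrict hI, Set.inter_eq_self_of_subset_left hIsub]
    _ = ∫ ω in U ⁻¹' I, leftQuantile μ X (U ω) ∂μ :=
        setIntegral_map hI hqm.aestronglyMeasurable hU
    _ = ∫ ω in U ⁻¹' I, X ω ∂μ := integral_congr_ae (ae_restrict_of_ae hq)

theorem stmt14 {Ω : Type*} [MeasurableSpace Ω] (μ : Measure Ω) [IsProbabilityMeasure μ]
    (X₁ X₂ : Ω → ℝ) (hX₁ : Integrable X₁ μ) (hX₂ : Integrable X₂ μ)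
    (r s : ℝ) (hr : 0 < r) (hs : 0 < s) (hrs : r + s ≤ 1)
    (β₁ β₂ B : ℝ) (hβ₁ : 0 < β₁) (hβ₂ : 0 < β₂) (hBdef : B = β₁ + β₂)
    (hB : B ∈ Set.Ioo (0 : ℝ) 1)
    (U₁ U₂ US : Ω → ℝ)
    (hU₁law : Measure.map U₁ μ = volume.restrict (Set.Icc (0 : ℝ) 1))
    (hU₂law : Measure.map U₂ μ = volume.restrict (Set.Icc (0 : ℝ) 1))
    (hUSlaw : Measure.map US μ = volume.restrict (Set.Icc (0 : ℝ) 1))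
    (hU₁X : ∀ᵐ ω ∂μ, leftQuantile μ X₁ (U₁ ω) = X₁ ω)
    (hU₂X : ∀ᵐ ω ∂μ, leftQuantile μ X₂ (U₂ ω) = X₂ ω)
    (hUSX : ∀ᵐ ω ∂μ, leftQuantile μ (fun ω' => X₁ ω' + X₂ ω') (US ω) = X₁ ω + X₂ ω)
    (hE₁ : μ (({ω | US ω ≤ B} \ {ω | U₁ ω ∈ Set.Icc 0 β₁ ∪ Set.Icc (1 - B + β₁) 1})
        ∪ ({ω | U₁ ω ∈ Set.Icc 0 β₁ ∪ Set.Icc (1 - B + β₁) 1} \ {ω | US ω ≤ B})) = 0)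
    (hE₂ : μ (({ω | US ω ≤ B} \ {ω | U₂ ω ∈ Set.Icc 0 β₂ ∪ Set.Icc (1 - B + β₂) 1})
        ∪ ({ω | U₂ ω ∈ Set.Icc 0 β₂ ∪ Set.Icc (1 - B + β₂) 1} \ {ω | US ω ≤ B})) = 0) :
    avgQuantile μ (fun ω => X₁ ω + X₂ ω) (Set.Icc 0 B)
      = avgQuantile μ X₁ (Set.Icc 0 β₁ ∪ Set.Icc (1 - B + β₁) 1)
        + avgQuantile μ X₂ (Set.Icc 0 β₂ ∪ Set.Icc (1 - B + β₂) 1) := by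
  obtain ⟨hB0, hB1⟩ := hB
  have hβ₁B : β₁ < B := by rw [hBdef]; linarith
  have hβ₂B : β₂ < B := by rw [hBdef]; linarith
  set I₀ : Set ℝ := Set.Icc 0 B with hI₀
  set I₁ : Set ℝ := Set.Icc 0 β₁ ∪ Set.Icc (1 - B + β₁) 1 with hI₁def
  set I₂ : Set ℝ := Set.Icc 0 β₂ ∪ Set.Icc (1 - B + β₂) 1 with hI₂def
  have hSint : Integrable (fun ω => X₁ ω + X₂ ω) μ := hX₁.add hX₂
  have hI₀m : MeasurableSet I₀ := measurableSet_Icc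
  have hI₁m : MeasurableSet I₁ := measurableSet_Icc.union measurableSet_Icc
  have hI₂m : MeasurableSet I₂ := measurableSet_Icc.union measurableSet_Icc
  have hI₀sub : I₀ ⊆ Set.Icc 0 1 := Set.Icc_subset_Icc le_rfl hB1.le
  have hI₁sub : I₁ ⊆ Set.Icc 0 1 :=
    Set.union_subset (Set.Icc_subset_Icc le_rfl (by linarith))
      (Set.Icc_subset_Icc (by linarith) le_rfl)
  have hI₂sub : I₂ ⊆ Set.Icc 0 1 :=
    Set.union_subset (Set.Icc_subset_Icc le_rfl (by linarith))
      (Set.Icc_subset_Icc (by linarith) le_rfl)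
  have hUS : AEMeasurable US μ := aux_aemeasurable_of_law hUSlaw
  -- the set {US ≤ B} agrees a.e. with US ⁻¹' I₀
  have hUSnn : ∀ᵐ ω ∂μ, 0 ≤ US ω := by
    rw [ae_iff]
    have : {ω | ¬ 0 ≤ US ω} = US ⁻¹' Set.Iio 0 := by ext ω; simp [Set.mem_preimage]
    rw [this, ← Measure.map_apply_of_aemeasurable hUS measurableSet_Iio, hUSlaw,
      Measure.restrict_apply measurableSet_Iio]
    convert measure_empty (μ := volume)
    ext x; simp only [Set.mem_inter_iff, Set.mem_Iio, Set.mem_Icc, Set.mem_empty_iff_false,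
      iff_false, not_and]
    intro hx hx2
    exact absurd hx2 (not_le.2 hx)
  have hA₀ : US ⁻¹' I₀ =ᵐ[μ] {ω | US ω ≤ B} := by
    rw [Filter.eventuallyEq_set]
    filter_upwards [hUSnn] with ω hω
    simp only [Set.mem_preimage, hI₀, Set.mem_Icc, Set.mem_setOf_eq]
    exact ⟨fun h => h.2, fun h => ⟨hω, h⟩⟩
  -- symmetric differences
  have hA₁ : ({ω | US ω ≤ B} : Set Ω) =ᵐ[μ] {ω | U₁ ω ∈ I₁} :=
    measure_symmDiff_eq_zero_iff.mp (by rw [Set.symmDiff_def]; exact hE₁)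
  have hA₂ : ({ω | US ω ≤ B} : Set Ω) =ᵐ[μ] {ω | U₂ ω ∈ I₂} :=
    measure_symmDiff_eq_zero_iff.mp (by rw [Set.symmDiff_def]; exact hE₂)
  -- key integral identities
  have key₀ : ∫ u in I₀, leftQuantile μ (fun ω => X₁ ω + X₂ ω) u
      = ∫ ω in {ω | US ω ≤ B}, (X₁ ω + X₂ ω) ∂μ := by
    rw [aux_setIntegral μ _ US hSint hUSlaw hUSX I₀ hI₀m hI₀sub]
    exact setIntegral_congr_set hA₀
  have key₁ : ∫ u in I₁, leftQuantile μ X₁ u = ∫ ω in {ω | US ω ≤ B}, X₁ ω ∂μ := by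
    rw [aux_setIntegral μ _ U₁ hX₁ hU₁law hU₁X I₁ hI₁m hI₁sub]
    exact (setIntegral_congr_set hA₁).symm
  have key₂ : ∫ u in I₂, leftQuantile μ X₂ u = ∫ ω in {ω | US ω ≤ B}, X₂ ω ∂μ := by
    rw [aux_setIntegral μ _ U₂ hX₂ hU₂law hU₂X I₂ hI₂m hI₂sub]
    exact (setIntegral_congr_set hA₂).symm
  have hsplit : ∫ ω in {ω | US ω ≤ B}, (X₁ ω + X₂ ω) ∂μ
      = (∫ ω in {ω | US ω ≤ B}, X₁ ω ∂μ) + ∫ ω in {ω | US ω ≤ B}, X₂ ω ∂μ :=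
    integral_add hX₁.restrict hX₂.restrict
  -- volumes
  have v₀ : (volume I₀).toReal = B := by
    rw [hI₀, Real.volume_Icc, sub_zero, ENNReal.toReal_ofReal hB0.le]
  have v₁ : (volume I₁).toReal = B := by
    rw [hI₁def, measure_union (by
        refine Set.disjoint_left.2 fun x hx hx' => ?_
        have h1 : x ≤ β₁ := hx.2
        have h2 : 1 - B + β₁ ≤ x := hx'.1
        linarith) measurableSet_Icc,
      Real.volume_Icc, Real.volume_Icc, sub_zero,
      ← ENNReal.ofReal_add hβ₁.le (by linarith), ENNReal.toReal_ofReal (by linarith)]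
    ring
  have v₂ : (volume I₂).toReal = B := by
    rw [hI₂def, measure_union (by
        refine Set.disjoint_left.2 fun x hx hx' => ?_
        have h1 : x ≤ β₂ := hx.2
        have h2 : 1 - B + β₂ ≤ x := hx'.1
        linarith) measurableSet_Icc,
      Real.volume_Icc, Real.volume_Icc, sub_zero,
      ← ENNReal.ofReal_add hβ₂.le (by linarith), ENNReal.toReal_ofReal (by linarith)]
    ring
  show (volume I₀).toReal⁻¹ * _ = (volume I₁).toReal⁻¹ * _ + (volume I₂).toReal⁻¹ * _
  rw [v₀, v₁, v₂, key₀, key₁, key₂, hsplit]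
  ring
end

section
/- Let X be a random variable, A an event with P(A) = β ∈ (0,1), and suppose A = {U_X ≤ β} for a uniform transform U_X of X. Then (1/β)·E[X·1_A] = R_{[0,β]}(X) = LES_β(X), i.e., the conditional expectation of X on its lower-β tail event equals the averaged lower quantile. -/
open MeasureTheory Set Filter Topology

lemma leftQuantile_monotoneOn {Ω : Type*} [MeasurableSpace Ω] (μ : Measure Ω)
    [IsProbabilityMeasure μ] (X : Ω → ℝ) (hX : Integrable X μ) :
    MonotoneOn (leftQuantile μ X) (Set.Ioo (0 : ℝ) 1) := by
  obtain ⟨X', hX'm, hXX'⟩ := hX.1.aemeasurable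
  have hFcongr : ∀ x : ℝ, μ {ω | X ω ≤ x} = μ {ω | X' ω ≤ x} := by
    intro x
    refine measure_congr ?_
    rw [Filter.eventuallyEq_set]
    filter_upwards [hXX'] with ω hω
    simp [Set.mem_setOf_eq, hω]
  -- nonemptiness for v < 1
  have hne : ∀ v : ℝ, v < 1 → ∃ x : ℝ, v ≤ (μ {ω | X ω ≤ x}).toReal := by
    intro v hv
    have hmono : Monotone (fun n : ℕ => {ω | X' ω ≤ (n : ℝ)}) := by
      intro n m hnm ω hω
      simp only [Set.mem_setOf_eq] at hω ⊢
      exact hω.trans (Nat.cast_le.mpr hnm)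
    have h1 := tendsto_measure_iUnion_atTop (μ := μ) hmono
    have hU : (⋃ n : ℕ, {ω | X' ω ≤ (n : ℝ)}) = Set.univ := by
      ext ω
      simp only [Set.mem_iUnion, Set.mem_setOf_eq, Set.mem_univ, iff_true]
      exact exists_nat_ge (X' ω)
    rw [hU, measure_univ] at h1
    have h2 : Tendsto (fun n : ℕ => (μ {ω | X' ω ≤ (n : ℝ)}).toReal) atTop (𝓝 1) := by
      have := (ENNReal.tendsto_toReal (by simp)).comp h1
      exact this
    have := (h2.eventually_const_le hv).exists
    obtain ⟨n, hn⟩ := this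
    exact ⟨n, by rw [hFcongr]; exact hn⟩
  -- bounded below for u > 0
  have hbb : ∀ u : ℝ, 0 < u → ∃ x : ℝ, (μ {ω | X ω ≤ x}).toReal < u := by
    intro u hu
    have hanti : Antitone (fun n : ℕ => {ω | X' ω ≤ -(n : ℝ)}) := by
      intro n m hnm ω hω
      simp only [Set.mem_setOf_eq] at hω ⊢
      exact hω.trans (neg_le_neg (Nat.cast_le.mpr hnm))
    have hmeas : ∀ n : ℕ, NullMeasurableSet {ω | X' ω ≤ -(n : ℝ)} μ :=
      fun n => (hX'm measurableSet_Iic).nullMeasurableSet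
    have h1 := tendsto_measure_iInter_atTop hmeas hanti ⟨0, measure_ne_top μ _⟩
    have hI : (⋂ n : ℕ, {ω | X' ω ≤ -(n : ℝ)}) = (∅ : Set Ω) := by
      ext ω
      simp only [Set.mem_iInter, Set.mem_setOf_eq, Set.mem_empty_iff_false, iff_false, not_forall]
      obtain ⟨n, hn⟩ := exists_nat_gt (-X' ω)
      exact ⟨n, by push_neg; linarith⟩
    rw [hI, measure_empty] at h1
    have h2 : Tendsto (fun n : ℕ => (μ {ω | X' ω ≤ -(n : ℝ)}).toReal) atTop (𝓝 0) := by
      have := (ENNReal.tendsto_toReal (by simp)).comp h1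
      exact this
    obtain ⟨n, hn⟩ := (h2.eventually_lt_const hu).exists
    exact ⟨-(n : ℝ), by rw [hFcongr]; exact hn⟩
  intro u hu v hv huv
  have hnev : {x : ℝ | v ≤ (μ {ω | X ω ≤ x}).toReal}.Nonempty := hne v hv.2
  obtain ⟨x0, hx0⟩ := hbb u hu.1
  have hbdd : BddBelow {x : ℝ | u ≤ (μ {ω | X ω ≤ x}).toReal} := by
    refine ⟨x0, fun y hy => ?_⟩
    by_contra h
    push_neg at h
    have hsub : {ω | X ω ≤ y} ⊆ {ω | X ω ≤ x0} := fun ω hω => le_trans hω h.le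
    have : (μ {ω | X ω ≤ y}).toReal ≤ (μ {ω | X ω ≤ x0}).toReal :=
      ENNReal.toReal_mono (measure_ne_top μ _) (measure_mono hsub)
    have : u ≤ (μ {ω | X ω ≤ x0}).toReal := le_trans hy this
    linarith
  exact csInf_le_csInf hbdd hnev (fun x hx => le_trans huv hx)

theorem stmt16 {Ω : Type*} [MeasurableSpace Ω] (μ : Measure Ω) [IsProbabilityMeasure μ]
    (X : Ω → ℝ) (hX : Integrable X μ) (β : ℝ) (hβ : β ∈ Set.Ioo (0 : ℝ) 1)
    (U : Ω → ℝ) (hUlaw : Measure.map U μ = volume.restrict (Set.Icc (0 : ℝ) 1))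
    (hUX : ∀ᵐ ω ∂μ, leftQuantile μ X (U ω) = X ω)
    (A : Set Ω) (hA : A = {ω | U ω ≤ β}) (hPA : (μ A).toReal = β) :
    (1 / β) * ∫ ω in A, X ω ∂μ = avgQuantile μ X (Set.Icc 0 β) := by
  obtain ⟨hβ0, hβ1⟩ := hβ
  set q : ℝ → ℝ := leftQuantile μ X with hq
  have hUmeas : AEMeasurable U μ := by
    by_contra h
    rw [Measure.map_of_not_aemeasurable h] at hUlaw
    have h0 := congrArg (fun m : Measure ℝ => m (Set.Icc (0:ℝ) 1)) hUlaw
    simp [Measure.restrict_apply, Real.volume_Icc] at h0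
  have hqae : AEMeasurable q (volume.restrict (Set.Icc (0:ℝ) 1)) := by
    have heq : volume.restrict (Set.Icc (0:ℝ) 1) = volume.restrict (Set.Ioo 0 1) :=
      (Measure.restrict_congr_set Ioo_ae_eq_Icc).symm
    rw [heq]
    exact aemeasurable_restrict_of_monotoneOn measurableSet_Ioo
      (leftQuantile_monotoneOn μ X hX)
  have hq' : AEStronglyMeasurable q (Measure.map U μ) := by
    rw [hUlaw]; exact hqae.aestronglyMeasurable
  have hApre : A = U ⁻¹' Set.Iic β := by rw [hA]; rfl
  have step1 : ∫ ω in A, X ω ∂μ = ∫ ω in A, q (U ω) ∂μ := by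
    refine integral_congr_ae ?_
    exact ae_restrict_of_ae (hUX.mono fun ω hω => hω.symm)
  have step2 : ∫ u in Set.Iic β, q u ∂(Measure.map U μ) = ∫ ω in A, q (U ω) ∂μ := by
    rw [hApre]
    exact setIntegral_map measurableSet_Iic hq' hUmeas
  have step3 : ∫ u in Set.Iic β, q u ∂(Measure.map U μ) = ∫ u in Set.Icc 0 β, q u := by
    have hset : Set.Iic β ∩ Set.Icc 0 1 = Set.Icc (0:ℝ) β := by
      ext x
      simp only [Set.mem_inter_iff, Set.mem_Iic, Set.mem_Icc]
      constructor
      · rintro ⟨h1, h2, h3⟩; exact ⟨h2, h1⟩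
      · rintro ⟨h1, h2⟩; exact ⟨h2, h1, le_trans h2 hβ1.le⟩
    rw [hUlaw, Measure.restrict_restrict measurableSet_Iic, hset]
  have hvol : (volume (Set.Icc (0:ℝ) β)).toReal = β := by
    rw [Real.volume_Icc, ENNReal.toReal_ofReal (by linarith)]
    ring
  rw [step1, ← step2, step3, avgQuantile, hvol, one_div]
end
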